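/- arXiv:1803.03561 — 4 statements merged into one kernel-verified Lean document; each statement's English description precedes it below -/
import Mathlib

section
/- Let d ≥ 1, 0 < q ≤ p ≤ 1, 1 < r < ∞, r' = r/(r−1), and let δ ≥ ⌊d(1/q−1)⌋ be an integer. Let g be a locally L^{r'} function on ℝ^d and M ≥ 0, and suppose that for every cube Q ⊂ ℝ^d there exists a polynomial P_Q of degree at most δ such that (|Q| / ‖χ_Q‖_{q,p}) · ( |Q|^{−1} ∫_Q |g(x) − P_Q(x)|^{r'} dx )^{1/r'} ≤ M. Then for every finite family (a_n, Q^n)_{n=0}^m of (q,r,δ)-atoms with associated cubes and every family of scalars (λ_n)_{n=0}^m, the function f = Σ_{n=0}^m λ_n a_n satisfies | ∫_{ℝ^d} f(x) g(x) dx | ≤ M · Σ_{n=0}^m |λ_n| |Q^n|^{−1/q} ‖χ_{Q^n}‖_{q,p}. -/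
open MeasureTheory ENNReal Metric Set
noncomputable section

/-- `ℝ^d` with the Euclidean norm. -/
abbrev Rd (d : ℕ) := EuclideanSpace ℝ (Fin d)

/-- The unit cube `Q_k = k + [0,1)^d` for `k ∈ ℤ^d`. -/
def unitCube (d : ℕ) (k : Fin d → ℤ) : Set (Rd d) :=
  {x | ∀ i, (k i : ℝ) ≤ x i ∧ x i < (k i : ℝ) + 1}

/-- Wiener amalgam quasi-norm `‖f‖_{q,p}` of an `ℝ≥0∞`-valued function on `ℝ^d`:
`( Σ_{k∈ℤ^d} ( ∫_{Q_k} f^q )^{p/q} )^{1/p}`. -/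
def amalgamNorm (d : ℕ) (q p : ℝ) (f : Rd d → ℝ≥0∞) : ℝ≥0∞ :=
  (∑' k : Fin d → ℤ, (∫⁻ x in unitCube d k, f x ^ q) ^ (p / q)) ^ (1 / p)

/-- The closed axis-parallel cube with center `c` and side-length `ℓ`. -/
def cube {d : ℕ} (c : Rd d) (ℓ : ℝ) : Set (Rd d) := {x | ∀ i, |x i - c i| ≤ ℓ / 2}

/-- Evaluation of a (complex) polynomial in `d` variables at a point of `ℝ^d`. -/
def evalPoly {d : ℕ} (P : MvPolynomial (Fin d) ℂ) (x : Rd d) : ℂ :=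
  MvPolynomial.eval (fun i => (x i : ℂ)) P

/-- A `(q,r,δ)`-atom (with `1 < r < ∞`) associated with the cube of center `c` and
side-length `ℓ`: a measurable function supported in the cube, with
`‖a‖_{L^r} ≤ |Q|^{1/r-1/q}` and vanishing moments up to order `δ`. -/
def HardyAtom {d : ℕ} (q r : ℝ) (δ : ℕ) (a : Rd d → ℂ) (c : Rd d) (ℓ : ℝ) : Prop :=
  Measurable a ∧ (∀ x ∉ cube c ℓ, a x = 0) ∧
    (∫⁻ x, (‖a x‖₊ : ℝ≥0∞) ^ r) ^ (1 / r) ≤ ENNReal.ofReal ((ℓ ^ d) ^ (1 / r - 1 / q)) ∧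
    ∀ β : Fin d → ℕ, (∑ i, β i) ≤ δ → ∫ x, (∏ i, (x i : ℂ) ^ β i) * a x = 0

namespace S5

variable {d : ℕ}

lemma cube_eq (c : Rd d) (ℓ : ℝ) :
    cube c ℓ = ⋂ i, (fun x : Rd d => x i) ⁻¹' Icc (c i - ℓ/2) (c i + ℓ/2) := by
  ext x
  simp only [cube, mem_setOf_eq, mem_iInter, mem_preimage, mem_Icc, abs_le]
  constructor <;> intro h i <;> have hh := h i <;> constructor <;> linarith [hh.1, hh.2]

lemma isClosed_cube (c : Rd d) (ℓ : ℝ) : IsClosed (cube c ℓ) := by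
  rw [cube_eq]
  exact isClosed_iInter fun i =>
    isClosed_Icc.preimage (EuclideanSpace.proj (𝕜 := ℝ) i).continuous

lemma measurableSet_cube (c : Rd d) (ℓ : ℝ) : MeasurableSet (cube c ℓ) :=
  (isClosed_cube c ℓ).measurableSet

lemma isCompact_cube (c : Rd d) (ℓ : ℝ) : IsCompact (cube c ℓ) := by
  refine Metric.isCompact_of_isClosed_isBounded (isClosed_cube c ℓ) ?_
  refine (Metric.isBounded_closedBall (x := c) (r := Real.sqrt (d * (ℓ/2)^2))).subset ?_
  intro x hx
  simp only [mem_closedBall]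
  rw [EuclideanSpace.dist_eq]
  apply Real.sqrt_le_sqrt
  calc ∑ i, dist (x i) (c i) ^ 2 ≤ ∑ _i : Fin d, (ℓ/2)^2 := by
        refine Finset.sum_le_sum fun i _ => ?_
        rw [Real.dist_eq]
        exact pow_le_pow_left₀ (abs_nonneg _) (hx i) 2
    _ = d * (ℓ/2)^2 := by simp [Finset.sum_const, Finset.card_univ]

lemma volume_cube_lt_top (c : Rd d) (ℓ : ℝ) : volume (cube c ℓ) < ⊤ :=
  (isCompact_cube c ℓ).measure_lt_top

lemma lintegral_indicator_one_rpow {q : ℝ} (hq : 0 < q) (c : Rd d) (ℓ : ℝ) (k : Fin d → ℤ) :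
    (∫⁻ x in unitCube d k, ((cube c ℓ).indicator (fun _ => (1:ℝ≥0∞)) x) ^ q)
      = volume (cube c ℓ ∩ unitCube d k) := by
  have h1 : ∀ x : Rd d, ((cube c ℓ).indicator (fun _ => (1:ℝ≥0∞)) x) ^ q
      = (cube c ℓ).indicator (fun _ => (1:ℝ≥0∞)) x := by
    intro x; by_cases hx : x ∈ cube c ℓ
    · simp [hx]
    · simp [hx, ENNReal.zero_rpow_of_pos hq]
  simp_rw [h1]
  rw [lintegral_indicator (measurableSet_cube c ℓ), setLIntegral_one,
    Measure.restrict_apply (measurableSet_cube c ℓ)]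

lemma amalgam_ne_top {q p : ℝ} (hq : 0 < q) (hp : 0 < p) (c : Rd d) (ℓ : ℝ) :
    amalgamNorm d q p ((cube c ℓ).indicator fun _ => 1) ≠ ⊤ := by
  rw [amalgamNorm]
  refine (ENNReal.rpow_lt_top_of_nonneg (by positivity) ?_).ne
  have hterm : ∀ k : Fin d → ℤ,
      (∫⁻ x in unitCube d k, ((cube c ℓ).indicator (fun _ => (1:ℝ≥0∞)) x) ^ q) ^ (p/q)
        = volume (cube c ℓ ∩ unitCube d k) ^ (p/q) := fun k => by
    rw [lintegral_indicator_one_rpow hq]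
  simp_rw [hterm]
  have hfin : {k : Fin d → ℤ | volume (cube c ℓ ∩ unitCube d k) ^ (p/q) ≠ 0}.Finite := by
    have hsub : {k : Fin d → ℤ | volume (cube c ℓ ∩ unitCube d k) ^ (p/q) ≠ 0}
        ⊆ univ.pi (fun i : Fin d => Set.Icc (⌈c i - ℓ/2 - 1⌉) (⌊c i + ℓ/2⌋)) := by
      intro k hk
      have hvol : volume (cube c ℓ ∩ unitCube d k) ≠ 0 := by
        intro h0
        exact hk (by rw [h0, ENNReal.zero_rpow_of_pos (by positivity)])
      obtain ⟨x, hxc, hxu⟩ := nonempty_of_measure_ne_zero hvol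
      refine Set.mem_univ_pi.mpr fun i => ?_
      have h1 := abs_le.mp (hxc i)
      have h2 := hxu i
      constructor
      · exact Int.ceil_le.mpr (by linarith [h1.1, h2.2])
      · exact Int.le_floor.mpr (by linarith [h1.2, h2.1])
    exact (Set.Finite.pi fun i => Set.finite_Icc _ _).subset hsub
  rw [tsum_eq_sum (s := hfin.toFinset)
    (fun k hk => not_not.mp (by simpa using hk))]
  refine (ENNReal.sum_lt_top.mpr fun k _ => ?_).ne
  exact ENNReal.rpow_lt_top_of_nonneg (by positivity)
    ((measure_mono inter_subset_left).trans_lt (volume_cube_lt_top c ℓ)).ne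

lemma continuous_evalPoly (P : MvPolynomial (Fin d) ℂ) : Continuous (evalPoly (d := d) P) := by
  have : (evalPoly (d := d) P)
      = fun x => ∑ β ∈ P.support, MvPolynomial.coeff β P * ∏ i, ((x i : ℂ)) ^ β i := by
    funext x; rw [evalPoly, MvPolynomial.eval_eq']
  rw [this]
  refine continuous_finset_sum _ fun β _ => Continuous.mul continuous_const ?_
  refine continuous_finset_prod _ fun i _ => ?_
  exact (Complex.continuous_ofReal.comp (EuclideanSpace.proj (𝕜 := ℝ) i).continuous).pow _

lemma lint_cont_rpow_ne_top (h : Rd d → ℂ) (hh : Continuous h) (c : Rd d) (ℓ : ℝ)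
    (s : ℝ) (hs : 0 ≤ s) :
    (∫⁻ x in cube c ℓ, (‖h x‖₊ : ℝ≥0∞) ^ s) ≠ ⊤ := by
  obtain ⟨C, hC⟩ := (isCompact_cube c ℓ).exists_bound_of_continuousOn hh.continuousOn
  have hb : ∀ x ∈ cube c ℓ, (‖h x‖₊ : ℝ≥0∞) ^ s ≤ ENNReal.ofReal C ^ s := fun x hx =>
    ENNReal.rpow_le_rpow
      (by rw [← ofReal_coe_nnreal, coe_nnnorm]; exact ENNReal.ofReal_le_ofReal (hC x hx)) hs
  refine ne_top_of_le_ne_top ?_ ((setLIntegral_mono measurable_const hb).trans_eq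
    (setLIntegral_const _ _))
  exact ENNReal.mul_ne_top (ENNReal.rpow_lt_top_of_nonneg hs ENNReal.ofReal_ne_top).ne
    (volume_cube_lt_top c ℓ).ne

lemma holder_pairing {r r' : ℝ} (hr'0 : 0 < r') (hconj : r.HolderConjugate r')
    (a h : Rd d → ℂ) (hma : Measurable a) {c : Rd d} {ℓ : ℝ}
    (ha0 : ∀ x ∉ cube c ℓ, a x = 0) (hmh : Measurable h) :
    (∫⁻ x, (‖a x * h x‖₊ : ℝ≥0∞))
      ≤ (∫⁻ x, (‖a x‖₊ : ℝ≥0∞) ^ r) ^ (1/r)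
        * (∫⁻ x in cube c ℓ, (‖h x‖₊ : ℝ≥0∞) ^ r') ^ (1/r') := by
  set G : Rd d → ℝ≥0∞ := (cube c ℓ).indicator (fun y => (‖h y‖₊ : ℝ≥0∞)) with hG
  have hGm : Measurable G := hmh.enorm.indicator (measurableSet_cube c ℓ)
  have hpt : ∀ x, (‖a x * h x‖₊ : ℝ≥0∞) = (‖a x‖₊ : ℝ≥0∞) * G x := by
    intro x; by_cases hx : x ∈ cube c ℓ
    · simp [hG, indicator_of_mem hx, nnnorm_mul]
    · simp [hG, indicator_of_notMem hx, ha0 x hx]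
  have hGr : (∫⁻ x, G x ^ r') = ∫⁻ x in cube c ℓ, (‖h x‖₊ : ℝ≥0∞) ^ r' := by
    have hpt2 : ∀ x, G x ^ r'
        = (cube c ℓ).indicator (fun y => (‖h y‖₊ : ℝ≥0∞) ^ r') x := by
      intro x; by_cases hx : x ∈ cube c ℓ <;>
        simp [hG, hx, ENNReal.zero_rpow_of_pos hr'0]
    simp_rw [hpt2]
    exact lintegral_indicator (measurableSet_cube c ℓ) _
  have hH := ENNReal.lintegral_mul_le_Lp_mul_Lq volume hconj
    hma.enorm.aemeasurable hGm.aemeasurable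
  simp only [Pi.mul_apply] at hH
  calc (∫⁻ x, (‖a x * h x‖₊ : ℝ≥0∞)) = ∫⁻ x, (‖a x‖₊ : ℝ≥0∞) * G x := by simp_rw [hpt]
    _ ≤ (∫⁻ x, (‖a x‖₊ : ℝ≥0∞) ^ r) ^ (1/r) * (∫⁻ x, G x ^ r') ^ (1/r') := hH
    _ = _ := by rw [hGr]

lemma integrable_atom_mul {r r' : ℝ} (hr0 : 0 < r) (hr'0 : 0 < r')
    (hconj : r.HolderConjugate r')
    (a h : Rd d → ℂ) (hma : Measurable a) (c : Rd d) (ℓ : ℝ)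
    (ha0 : ∀ x ∉ cube c ℓ, a x = 0)
    (har : (∫⁻ x, (‖a x‖₊ : ℝ≥0∞) ^ r) ≠ ⊤)
    (hmh : Measurable h)
    (hh : (∫⁻ x in cube c ℓ, (‖h x‖₊ : ℝ≥0∞) ^ r') ≠ ⊤) :
    Integrable (fun x => a x * h x) := by
  refine ⟨(hma.mul hmh).aestronglyMeasurable, ?_⟩
  rw [hasFiniteIntegral_def]
  refine lt_of_le_of_lt (holder_pairing hr'0 hconj a h hma ha0 hmh) ?_
  exact ENNReal.mul_lt_top
    (ENNReal.rpow_lt_top_of_nonneg (by positivity) har)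
    (ENNReal.rpow_lt_top_of_nonneg (by positivity) hh)

lemma integral_atom_mul_poly {q r : ℝ} {δ : ℕ} {a : Rd d → ℂ} {c : Rd d} {ℓ : ℝ}
    (hatom : HardyAtom q r δ a c ℓ)
    (hInt : ∀ h : Rd d → ℂ, Continuous h → Integrable fun x => a x * h x)
    (P : MvPolynomial (Fin d) ℂ) (hP : P.totalDegree ≤ δ) :
    ∫ x, a x * evalPoly P x = 0 := by
  have heval : ∀ x : Rd d, a x * evalPoly P x
      = ∑ β ∈ P.support, MvPolynomial.coeff β P * ((∏ i, ((x i : ℂ)) ^ β i) * a x) := by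
    intro x
    rw [evalPoly, MvPolynomial.eval_eq', Finset.mul_sum]
    exact Finset.sum_congr rfl fun β _ => by ring
  simp_rw [heval]
  rw [integral_finset_sum]
  · refine Finset.sum_eq_zero fun β hβ => ?_
    have hdeg : (∑ i, β i) ≤ δ := by
      have h1 := MvPolynomial.le_totalDegree hβ
      have h2 : (β.sum fun _ e => e) = ∑ i, β i :=
        Finsupp.sum_fintype _ _ (fun _ => rfl)
      omega
    have hmono := hatom.2.2.2 (fun i => β i) hdeg
    rw [integral_const_mul, hmono, mul_zero]
  · intro β _
    have hc : Continuous fun x : Rd d => ∏ i, ((x i : ℂ)) ^ β i :=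
      continuous_finset_prod _ fun i _ =>
        (Complex.continuous_ofReal.comp (EuclideanSpace.proj (𝕜 := ℝ) i).continuous).pow _
    have h2 := (hInt _ hc).const_mul (MvPolynomial.coeff β P)
    have h3 : (fun x => MvPolynomial.coeff β P * ((∏ i, ((x i : ℂ)) ^ β i) * a x))
        = fun x => MvPolynomial.coeff β P * (a x * ∏ i, ((x i : ℂ)) ^ β i) :=
      funext fun x => by ring
    rw [h3]; exact h2

end S5
namespace S5

lemma atom_estimate {d : ℕ} (q p r r' : ℝ) (hq0 : 0 < q) (hqp : q ≤ p)
    (hr : 1 < r) (hr'def : r' = r / (r - 1)) (δ : ℕ)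
    (g : Rd d → ℂ) (hgmeas : Measurable g)
    (hgloc : ∀ (c : Rd d) (ℓ : ℝ), 0 < ℓ →
      (∫⁻ x in cube c ℓ, (‖g x‖₊ : ℝ≥0∞) ^ r') ≠ ∞)
    (M : ℝ)
    (hg : ∀ (c : Rd d) (ℓ : ℝ), 0 < ℓ →
      ∃ P : MvPolynomial (Fin d) ℂ, P.totalDegree ≤ δ ∧
        (ENNReal.ofReal (ℓ ^ d) /
            amalgamNorm d q p ((cube c ℓ).indicator fun _ => 1)) *
          ((ENNReal.ofReal (ℓ ^ d))⁻¹ *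
            ∫⁻ x in cube c ℓ, (‖g x - evalPoly P x‖₊ : ℝ≥0∞) ^ r') ^ (1 / r') ≤
          ENNReal.ofReal M)
    (a : Rd d → ℂ) (c : Rd d) (ℓ : ℝ) (hl : 0 < ℓ)
    (hatom : HardyAtom q r δ a c ℓ) :
    (‖∫ x, a x * g x‖₊ : ℝ≥0∞) ≤
      ENNReal.ofReal M * ENNReal.ofReal ((ℓ ^ d) ^ (-(1 / q))) *
        amalgamNorm d q p ((cube c ℓ).indicator fun _ => 1) := by
  obtain ⟨hma, ha0, haLr, hamom⟩ := hatom
  have hr0 : (0:ℝ) < r := lt_trans one_pos hr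
  have hr1 : (0:ℝ) < r - 1 := by linarith
  have hr'0 : (0:ℝ) < r' := by rw [hr'def]; positivity
  have hconj : r.HolderConjugate r' := by
    rw [Real.holderConjugate_iff_eq_conjExponent hr]
    exact hr'def
  have har_ne : (∫⁻ x, (‖a x‖₊ : ℝ≥0∞) ^ r) ≠ ⊤ := by
    intro htop
    rw [htop, ENNReal.top_rpow_of_pos (by positivity)] at haLr
    exact ENNReal.ofReal_ne_top (top_le_iff.mp haLr)
  obtain ⟨P, hPdeg, hPbound⟩ := hg c ℓ hl
  have hPev : Continuous (evalPoly P) := continuous_evalPoly P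
  have hIntCont : ∀ h : Rd d → ℂ, Continuous h → Integrable fun x => a x * h x := fun h hh =>
    integrable_atom_mul hr0 hr'0 hconj a h hma c ℓ ha0 har_ne hh.measurable
      (lint_cont_rpow_ne_top h hh c ℓ r' hr'0.le)
  have hint_ag : Integrable (fun x => a x * g x) :=
    integrable_atom_mul hr0 hr'0 hconj a g hma c ℓ ha0 har_ne hgmeas (hgloc c ℓ hl)
  have hmom := integral_atom_mul_poly ⟨hma, ha0, haLr, hamom⟩ hIntCont P hPdeg
  have hsplit : ∫ x, a x * g x = ∫ x, a x * (g x - evalPoly P x) := by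
    have hfe : (fun x => a x * (g x - evalPoly P x))
        = fun x => a x * g x - a x * evalPoly P x := funext fun x => mul_sub _ _ _
    rw [hfe, integral_sub hint_ag (hIntCont _ hPev), hmom, sub_zero]
  rw [hsplit]
  set I := ∫⁻ x in cube c ℓ, (‖g x - evalPoly P x‖₊ : ℝ≥0∞) ^ r' with hI
  set A := amalgamNorm d q p ((cube c ℓ).indicator fun _ => (1:ℝ≥0∞)) with hA
  have hA_ne : A ≠ ⊤ := amalgam_ne_top hq0 (lt_of_lt_of_le hq0 hqp) c ℓ
  have hld : (0:ℝ) < ℓ ^ d := by positivity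
  set V := ENNReal.ofReal (ℓ ^ d) with hV
  have hV0 : V ≠ 0 := by
    rw [hV]; simp only [ne_eq, ENNReal.ofReal_eq_zero, not_le]; exact hld
  have hVt : V ≠ ⊤ := ENNReal.ofReal_ne_top
  have hB : (‖∫ x, a x * (g x - evalPoly P x)‖₊ : ℝ≥0∞) ≤ V ^ (1/r - 1/q) * I ^ (1/r') := by
    calc (‖∫ x, a x * (g x - evalPoly P x)‖₊ : ℝ≥0∞)
        ≤ ∫⁻ x, (‖a x * (g x - evalPoly P x)‖₊ : ℝ≥0∞) :=
          enorm_integral_le_lintegral_enorm _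
      _ ≤ (∫⁻ x, (‖a x‖₊ : ℝ≥0∞) ^ r) ^ (1/r) * I ^ (1/r') :=
          holder_pairing hr'0 hconj a _ hma ha0 (hgmeas.sub hPev.measurable)
      _ ≤ V ^ (1/r - 1/q) * I ^ (1/r') := by
          refine mul_le_mul_left ?_ _
          rw [hV, ENNReal.ofReal_rpow_of_pos hld]
          exact haLr
  refine hB.trans ?_
  rw [← ENNReal.ofReal_rpow_of_pos hld, ← hV]
  by_cases hA0 : A = 0
  · rw [hA0] at hPbound ⊢
    rw [ENNReal.div_zero hV0] at hPbound
    have hX0 : ((V⁻¹ * I) ^ (1/r')) = 0 := by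
      by_contra hne
      rw [ENNReal.top_mul hne] at hPbound
      exact ENNReal.ofReal_ne_top (top_le_iff.mp hPbound)
    have hI0 : I = 0 := by
      have h1 : V⁻¹ * I = 0 := by
        rcases ENNReal.rpow_eq_zero_iff.mp hX0 with ⟨h, _⟩ | ⟨_, hn⟩
        · exact h
        · exfalso; have : (0:ℝ) < 1/r' := by positivity
          linarith
      have h2 : V⁻¹ ≠ 0 := ENNReal.inv_ne_zero.mpr hVt
      exact (mul_eq_zero.mp h1).resolve_left h2
    rw [hI0, ENNReal.zero_rpow_of_pos (by positivity), mul_zero]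
    exact bot_le
  · have hmul := mul_le_mul_left hPbound A
    rw [mul_right_comm, ENNReal.div_mul_cancel hA0 hA_ne] at hmul
    by_cases hIt : I = ⊤
    · exfalso
      rw [hIt, ENNReal.mul_top (ENNReal.inv_ne_zero.mpr hVt),
        ENNReal.top_rpow_of_pos (by positivity), ENNReal.mul_top hV0] at hmul
      exact ENNReal.mul_ne_top ENNReal.ofReal_ne_top hA_ne (top_le_iff.mp hmul)
    · have hVinv_ne : V⁻¹ ≠ ⊤ := ENNReal.inv_ne_top.mpr hV0
      have hsplit2 : (V⁻¹ * I) ^ (1/r') = V⁻¹ ^ (1/r') * I ^ (1/r') :=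
        ENNReal.mul_rpow_of_ne_top hVinv_ne hIt _
      have hexp : 1/r - 1/q = (-(1/q)) + (1 + (-(1/r'))) := by
        rw [hr'def]; field_simp; ring
      calc V ^ (1/r - 1/q) * I ^ (1/r')
          = V ^ (-(1/q)) * (V * V ^ (-(1/r')) * I ^ (1/r')) := by
            rw [hexp, ENNReal.rpow_add _ _ hV0 hVt, ENNReal.rpow_add _ _ hV0 hVt,
              ENNReal.rpow_one]; ring
        _ = V ^ (-(1/q)) * (V * (V⁻¹ * I) ^ (1/r')) := by
            rw [hsplit2, ENNReal.inv_rpow, ← ENNReal.rpow_neg]; ring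
        _ ≤ V ^ (-(1/q)) * (ENNReal.ofReal M * A) := mul_le_mul_right hmul _
        _ = ENNReal.ofReal M * V ^ (-(1/q)) * A := by ring

end S5

/-- Duality estimate: if `g` is locally `L^{r'}` and satisfies the Campanato-type bound
`(|Q|/‖χ_Q‖_{q,p}) (|Q|^{-1} ∫_Q |g − P_Q|^{r'})^{1/r'} ≤ M` for each cube `Q` (for some
polynomial `P_Q` of degree `≤ δ`), then for every finite atomic sum `f = Σ λ_n a_n` of
`(q,r,δ)`-atoms, `|∫ f g| ≤ M Σ_n |λ_n| |Q^n|^{−1/q} ‖χ_{Q^n}‖_{q,p}`. -/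
theorem statement5 {d : ℕ} (hd : 1 ≤ d) (q p r r' : ℝ) (hq0 : 0 < q) (hqp : q ≤ p)
    (hp1 : p ≤ 1) (hr : 1 < r) (hr' : r' = r / (r - 1)) (δ : ℕ)
    (hδ : ⌊(d : ℝ) * (1 / q - 1)⌋ ≤ (δ : ℤ))
    (g : Rd d → ℂ) (hgmeas : Measurable g)
    (hgloc : ∀ (c : Rd d) (ℓ : ℝ), 0 < ℓ →
      (∫⁻ x in cube c ℓ, (‖g x‖₊ : ℝ≥0∞) ^ r') ≠ ∞)
    (M : ℝ) (hM : 0 ≤ M)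
    (hg : ∀ (c : Rd d) (ℓ : ℝ), 0 < ℓ →
      ∃ P : MvPolynomial (Fin d) ℂ, P.totalDegree ≤ δ ∧
        (ENNReal.ofReal (ℓ ^ d) /
            amalgamNorm d q p ((cube c ℓ).indicator fun _ => 1)) *
          ((ENNReal.ofReal (ℓ ^ d))⁻¹ *
            ∫⁻ x in cube c ℓ, (‖g x - evalPoly P x‖₊ : ℝ≥0∞) ^ r') ^ (1 / r') ≤
          ENNReal.ofReal M)
    (m : ℕ) (a : Fin (m + 1) → Rd d → ℂ) (c : Fin (m + 1) → Rd d)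
    (ℓ : Fin (m + 1) → ℝ) (hℓ : ∀ n, 0 < ℓ n)
    (hatom : ∀ n, HardyAtom q r δ (a n) (c n) (ℓ n)) (lam : Fin (m + 1) → ℂ) :
    (‖∫ x, (∑ n, lam n * a n x) * g x‖₊ : ℝ≥0∞) ≤
      ENNReal.ofReal M *
        ∑ n, (‖lam n‖₊ : ℝ≥0∞) * ENNReal.ofReal ((ℓ n ^ d) ^ (-(1 / q))) *
          amalgamNorm d q p ((cube (c n) (ℓ n)).indicator fun _ => 1) := by
  have hr0 : (0:ℝ) < r := lt_trans one_pos hr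
  have hr1 : (0:ℝ) < r - 1 := by linarith
  have hr'0 : (0:ℝ) < r' := by rw [hr']; positivity
  have hconj : r.HolderConjugate r' := by
    rw [Real.holderConjugate_iff_eq_conjExponent hr]
    exact hr'
  have har_ne : ∀ n, (∫⁻ x, (‖a n x‖₊ : ℝ≥0∞) ^ r) ≠ ⊤ := by
    intro n htop
    have h := (hatom n).2.2.1
    rw [htop, ENNReal.top_rpow_of_pos (by positivity)] at h
    exact ENNReal.ofReal_ne_top (top_le_iff.mp h)
  have hint : ∀ n : Fin (m+1), Integrable (fun x => lam n * (a n x * g x)) := fun n =>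
    (S5.integrable_atom_mul hr0 hr'0 hconj (a n) g (hatom n).1 (c n) (ℓ n) (hatom n).2.1
      (har_ne n) hgmeas (hgloc _ _ (hℓ n))).const_mul _
  have hfun : (fun x => (∑ n, lam n * a n x) * g x)
      = fun x => ∑ n, lam n * (a n x * g x) := by
    funext x; rw [Finset.sum_mul]; exact Finset.sum_congr rfl fun n _ => mul_assoc _ _ _
  rw [hfun, integral_finset_sum _ fun n _ => hint n]
  have hIg : ∀ n ∈ Finset.univ, (∫ x, lam n * (a n x * g x)) = lam n * ∫ x, a n x * g x :=
    fun n _ => integral_const_mul _ _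
  rw [Finset.sum_congr rfl hIg]
  calc (‖∑ n, lam n * ∫ x, a n x * g x‖₊ : ℝ≥0∞)
      ≤ ∑ n, (‖lam n * ∫ x, a n x * g x‖₊ : ℝ≥0∞) := by
        exact_mod_cast nnnorm_sum_le Finset.univ (fun n => lam n * ∫ x, a n x * g x)
    _ = ∑ n, (‖lam n‖₊ : ℝ≥0∞) * (‖∫ x, a n x * g x‖₊ : ℝ≥0∞) := by
        simp [nnnorm_mul, ENNReal.coe_mul]
    _ ≤ ∑ n, (‖lam n‖₊ : ℝ≥0∞) *
          (ENNReal.ofReal M * ENNReal.ofReal ((ℓ n ^ d) ^ (-(1/q))) *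
            amalgamNorm d q p ((cube (c n) (ℓ n)).indicator fun _ => 1)) :=
        Finset.sum_le_sum fun n _ => mul_le_mul_right
          (S5.atom_estimate q p r r' hq0 hqp hr hr' δ g hgmeas hgloc M hg
            (a n) (c n) (ℓ n) (hℓ n) (hatom n)) _
    _ = _ := by
        rw [Finset.mul_sum]
        exact Finset.sum_congr rfl fun n _ => by ring
end
end

section
/- Let d ≥ 1, μ > 0, A > 0 and 0 < q ≤ 1. Let K : ℝ^d × ℝ^d ∖ Δ → ℂ (Δ the diagonal) satisfy |K(x,y) − K(x,z)| ≤ A |y−z|^μ / |x−y|^{d+μ} whenever |x−y| ≥ 2|y−z|. Let Q ⊂ ℝ^d be a cube with center x_Q and side-length ℓ, and let a be an integrable function supported in Q with ∫_{ℝ^d} a(y) dy = 0 and ∫_Q |a(y)| dy ≤ |Q|^{1−1/q}. Then there exists a constant C > 0, depending only on d and μ, such that for every x ∉ 2√d·Q, | ∫_Q K(x,y) a(y) dy | ≤ C A |Q|^{−1/q} ( 𝔐(χ_Q)(x) )^{(d+μ)/d}. -/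
open MeasureTheory ENNReal Metric Set
noncomputable section

/-- The Hardy–Littlewood maximal operator (with Euclidean balls). -/
def hlMax {d : ℕ} (f : Rd d → ℝ≥0∞) (x : Rd d) : ℝ≥0∞ :=
  ⨆ (r : ℝ) (_ : 0 < r), (volume (ball x r))⁻¹ * ∫⁻ y in ball x r, f y

lemma coord_le_dist {d : ℕ} (x y : Rd d) (i : Fin d) : |x i - y i| ≤ dist x y := by
  rw [EuclideanSpace.dist_eq, ← Real.sqrt_sq (abs_nonneg (x i - y i))]
  apply Real.sqrt_le_sqrt
  rw [sq_abs]
  have := Finset.single_le_sum (f := fun j => dist (x j) (y j) ^ 2)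
    (fun j _ => sq_nonneg _) (Finset.mem_univ i)
  simpa [Real.dist_eq] using this

lemma dist_le_of_mem_cube {d : ℕ} {c : Rd d} {ℓ : ℝ} (hℓ : 0 ≤ ℓ) {y : Rd d}
    (hy : y ∈ cube c ℓ) : dist y c ≤ Real.sqrt d * (ℓ / 2) := by
  rw [EuclideanSpace.dist_eq]
  have h1 : ∑ i, dist (y i) (c i) ^ 2 ≤ (d : ℝ) * (ℓ/2)^2 := by
    calc ∑ i, dist (y i) (c i) ^ 2 ≤ ∑ _i : Fin d, (ℓ/2)^2 := by
          apply Finset.sum_le_sum; intro i _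
          rw [Real.dist_eq]
          exact pow_le_pow_left₀ (abs_nonneg _) (hy i) 2
      _ = (d : ℝ) * (ℓ/2)^2 := by simp [Finset.sum_const]
  calc Real.sqrt _ ≤ Real.sqrt ((d:ℝ) * (ℓ/2)^2) := Real.sqrt_le_sqrt h1
    _ = Real.sqrt d * (ℓ/2) := by
        rw [Real.sqrt_mul (by positivity), Real.sqrt_sq (by positivity)]

lemma cube_eq_preimage {d : ℕ} (c : Rd d) (ℓ : ℝ) :
    cube c ℓ = (MeasurableEquiv.toLp 2 (Fin d → ℝ)).symm ⁻¹'
      (Set.univ.pi fun i => Set.Icc (c i - ℓ/2) (c i + ℓ/2)) := by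
  ext x
  simp only [cube, mem_setOf_eq, mem_preimage, Set.mem_pi, Set.mem_univ, forall_true_left,
    mem_Icc, abs_sub_le_iff]
  have : ∀ i, (MeasurableEquiv.toLp 2 (Fin d → ℝ)).symm x i = x i := fun i => rfl
  simp only [this]
  constructor
  · intro h i; obtain ⟨h1, h2⟩ := h i; constructor <;> linarith
  · intro h i; obtain ⟨h1, h2⟩ := h i; constructor <;> linarith

lemma measurableSet_cube {d : ℕ} (c : Rd d) (ℓ : ℝ) : MeasurableSet (cube c ℓ) := by
  rw [cube_eq_preimage]
  exact (MeasurableEquiv.toLp 2 (Fin d → ℝ)).symm.measurable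
    (MeasurableSet.univ_pi fun i => measurableSet_Icc)

lemma volume_cube {d : ℕ} (c : Rd d) {ℓ : ℝ} (hℓ : 0 ≤ ℓ) :
    volume (cube c ℓ) = ENNReal.ofReal (ℓ ^ d) := by
  have hmp := EuclideanSpace.volume_preserving_symm_measurableEquiv_toLp (Fin d)
  rw [cube_eq_preimage,
    hmp.measure_preimage ((MeasurableSet.univ_pi fun i => measurableSet_Icc).nullMeasurableSet),
    volume_pi_pi]
  simp [Real.volume_Icc, show ∀ i : Fin d, c i + ℓ/2 - (c i - ℓ/2) = ℓ from fun i => by ring,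
    ← ENNReal.ofReal_pow hℓ]


/-- Pointwise estimate of a singular integral of an atom away from (the dilate of) its
supporting cube: if `K` satisfies the Hörmander-type regularity bound of exponent `μ`
with constant `A`, and `a` is supported in the cube `Q` with `∫ a = 0` and
`∫_Q |a| ≤ |Q|^{1−1/q}`, then for `x ∉ 2√d·Q`,
`|∫_Q K(x,y) a(y) dy| ≤ C A |Q|^{−1/q} (𝔐 χ_Q (x))^{(d+μ)/d}`,
with `C` depending only on `d` and `μ`. -/
theorem statement8 {d : ℕ} (hd : 1 ≤ d) (μ : ℝ) (hμ : 0 < μ) :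
    ∃ C : ℝ, 0 < C ∧
      ∀ A : ℝ, 0 < A → ∀ q : ℝ, 0 < q → q ≤ 1 →
      ∀ K : Rd d → Rd d → ℂ,
        (∀ x y z : Rd d, x ≠ y → dist x y ≥ 2 * dist y z →
          ‖K x y - K x z‖ ≤ A * dist y z ^ μ / dist x y ^ ((d : ℝ) + μ)) →
      ∀ (c : Rd d) (ℓ : ℝ), 0 < ℓ →
      ∀ a : Rd d → ℂ, IntegrableOn a (cube c ℓ) → (∀ x ∉ cube c ℓ, a x = 0) →
        (∫ y in cube c ℓ, a y) = 0 →
        (∫ y in cube c ℓ, ‖a y‖) ≤ (ℓ ^ d) ^ (1 - 1 / q) →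
      ∀ x ∉ cube c (2 * Real.sqrt d * ℓ),
        (‖∫ y in cube c ℓ, K x y * a y‖₊ : ℝ≥0∞) ≤
          ENNReal.ofReal (C * A) * ENNReal.ofReal ((ℓ ^ d) ^ (-(1 / q))) *
            hlMax ((cube c ℓ).indicator fun _ => 1) x ^ (((d : ℝ) + μ) / d) := by
  set s := Real.sqrt d with hs
  have hd0 : (0:ℝ) < d := by exact_mod_cast Nat.pos_of_ne_zero (by omega)
  have hs1 : 1 ≤ s := Real.one_le_sqrt.mpr (by exact_mod_cast hd)
  have hs0 : 0 < s := lt_of_lt_of_le one_pos hs1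
  refine ⟨(s/2)^μ * 4^((d:ℝ)+μ), by positivity, ?_⟩
  intro A hA q hq hq1 K hK c ℓ hℓ a ha ha0 hmean hsize x hx
  by_cases hint : IntegrableOn (fun y => K x y * a y) (cube c ℓ) volume
  swap
  · rw [integral_undef hint]; simp
  -- geometry
  have hQmeas := measurableSet_cube c ℓ
  obtain ⟨i, hi⟩ : ∃ i, ¬ |x i - c i| ≤ (2*s*ℓ)/2 := by
    simpa [cube] using hx
  push_neg at hi
  have hRs : s * ℓ ≤ dist x c := by
    have h2 := coord_le_dist x c i
    nlinarith
  set R := dist x c with hR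
  have hR0 : 0 < R := lt_of_lt_of_le (by positivity) hRs
  have hxc : x ≠ c := dist_pos.mp hR0
  -- kernel bound
  have hKb : ∀ y ∈ cube c ℓ, ‖K x y - K x c‖ ≤ A * (s*ℓ/2)^μ / R^((d:ℝ)+μ) := by
    intro y hy
    have hyc : dist c y ≤ s * (ℓ/2) := by
      rw [dist_comm]; exact dist_le_of_mem_cube hℓ.le hy
    have hcond : dist x c ≥ 2 * dist c y := by nlinarith
    have hb := hK x c y hxc hcond
    rw [norm_sub_rev]
    refine hb.trans ?_
    have hnum : dist c y ^ μ ≤ (s*ℓ/2)^μ :=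
      Real.rpow_le_rpow dist_nonneg (by linarith) hμ.le
    apply div_le_div_of_nonneg_right ?_ (by positivity)
    exact mul_le_mul_of_nonneg_left hnum hA.le
  -- integral rewriting
  have h2 : IntegrableOn (fun y => (K x y - K x c) * a y) (cube c ℓ) volume := by
    have heq2 : (fun y => (K x y - K x c) * a y) = fun y => K x y * a y - K x c * a y := by
      funext y; ring
    rw [heq2]; exact hint.sub (ha.const_mul _)
  have heq : (∫ y in cube c ℓ, K x y * a y) = ∫ y in cube c ℓ, (K x y - K x c) * a y := by
    have h3 : (∫ y in cube c ℓ, (K x y - K x c) * a y)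
        = (∫ y in cube c ℓ, K x y * a y) - ∫ y in cube c ℓ, K x c * a y := by
      rw [← integral_sub hint (ha.const_mul _)]
      congr 1; funext y; ring
    rw [h3, integral_const_mul, hmean, mul_zero, sub_zero]
  set M := A * (s*ℓ/2)^μ / R^((d:ℝ)+μ) with hMdef
  have hM0 : 0 ≤ M := by positivity
  have hnorm : ‖∫ y in cube c ℓ, K x y * a y‖ ≤ M * (ℓ^d)^(1-1/q) := by
    rw [heq]
    calc ‖∫ y in cube c ℓ, (K x y - K x c) * a y‖
        ≤ ∫ y in cube c ℓ, ‖(K x y - K x c) * a y‖ := norm_integral_le_integral_norm _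
      _ ≤ ∫ y in cube c ℓ, M * ‖a y‖ := by
          refine setIntegral_mono_on h2.norm ((ha.norm).const_mul M) hQmeas ?_
          intro y hy
          rw [norm_mul]
          exact mul_le_mul_of_nonneg_right (hKb y hy) (norm_nonneg _)
      _ = M * ∫ y in cube c ℓ, ‖a y‖ := integral_const_mul M _
      _ ≤ M * (ℓ^d)^(1-1/q) := mul_le_mul_of_nonneg_left hsize hM0
  -- maximal function lower bound
  set r := R + s*ℓ with hrdef
  have hr0 : 0 < r := by positivity
  have hsub : cube c ℓ ⊆ ball x r := by
    intro y hy
    rw [mem_ball]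
    calc dist y x ≤ dist y c + dist c x := dist_triangle _ _ _
      _ ≤ s*(ℓ/2) + R := by
          rw [dist_comm c x]
          exact add_le_add (dist_le_of_mem_cube hℓ.le hy) le_rfl
      _ < r := by nlinarith
  have hballsub : ball x r ⊆ cube x (2*r) := by
    intro y hy i
    have h1 := coord_le_dist y x i
    have h2 : dist y x < r := mem_ball.mp hy
    show |y i - x i| ≤ (2*r)/2
    linarith
  have hvol_ball : volume (ball x r) ≤ ENNReal.ofReal ((2*r)^d) :=
    le_trans (measure_mono hballsub) (le_of_eq (volume_cube x (by positivity)))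
  have hint_eq : (∫⁻ y in ball x r, (cube c ℓ).indicator (fun _ => (1:ℝ≥0∞)) y)
      = ENNReal.ofReal (ℓ^d) := by
    rw [lintegral_indicator hQmeas, setLIntegral_one, Measure.restrict_apply hQmeas,
      inter_eq_self_of_subset_left hsub, volume_cube c hℓ.le]
  have hlow : ENNReal.ofReal (ℓ^d / (4*R)^d)
      ≤ hlMax ((cube c ℓ).indicator fun _ => 1) x := by
    have step : (volume (ball x r))⁻¹ * ∫⁻ y in ball x r, (cube c ℓ).indicator (fun _ => (1:ℝ≥0∞)) y
        ≤ hlMax ((cube c ℓ).indicator fun _ => 1) x := by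
      apply le_iSup₂ (f := fun (r : ℝ) (_ : 0 < r) =>
        (volume (ball x r))⁻¹ * ∫⁻ y in ball x r, (cube c ℓ).indicator (fun _ => (1:ℝ≥0∞)) y) r hr0
    refine le_trans ?_ step
    rw [hint_eq, ← ENNReal.div_eq_inv_mul]
    rw [ENNReal.ofReal_div_of_pos (by positivity)]
    refine ENNReal.div_le_div_left ?_ _
    refine hvol_ball.trans ?_
    apply ENNReal.ofReal_le_ofReal
    have h2r : 2*r ≤ 4*R := by nlinarith
    exact pow_le_pow_left₀ (by positivity) h2r d
  -- combine
  have hp0 : 0 ≤ ((d:ℝ)+μ)/d := by positivity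
  have hpow : ENNReal.ofReal ((ℓ^d/(4*R)^d)^(((d:ℝ)+μ)/d))
      ≤ hlMax ((cube c ℓ).indicator fun _ => 1) x ^ (((d:ℝ)+μ)/d) := by
    rw [← ENNReal.ofReal_rpow_of_pos (by positivity)]
    exact ENNReal.rpow_le_rpow hlow hp0
  calc (‖∫ y in cube c ℓ, K x y * a y‖₊ : ℝ≥0∞)
      = ENNReal.ofReal ‖∫ y in cube c ℓ, K x y * a y‖ := (ENNReal.ofReal_eq_coe_nnreal (norm_nonneg _)).symm
    _ ≤ ENNReal.ofReal (M * (ℓ^d)^(1-1/q)) := ENNReal.ofReal_le_ofReal hnorm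
    _ ≤ ENNReal.ofReal ((s/2)^μ * 4^((d:ℝ)+μ) * A * (ℓ^d)^(-(1/q)) * (ℓ^d/(4*R)^d)^(((d:ℝ)+μ)/d)) := by
        apply ENNReal.ofReal_le_ofReal
        apply le_of_eq
        -- real computation
        have hbase : (0:ℝ) < ℓ/(4*R) := by positivity
        have e1 : (ℓ^d/(4*R)^d : ℝ) = (ℓ/(4*R))^d := by rw [div_pow]
        have e2 : ((ℓ/(4*R))^d : ℝ)^(((d:ℝ)+μ)/d) = (ℓ/(4*R))^((d:ℝ)+μ) := by
          rw [← Real.rpow_natCast (ℓ/(4*R)) d, ← Real.rpow_mul hbase.le]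
          congr 1
          field_simp
        have e3 : ((ℓ/(4*R)):ℝ)^((d:ℝ)+μ) = ℓ^((d:ℝ)+μ) / (4*R)^((d:ℝ)+μ) :=
          Real.div_rpow hℓ.le (by positivity : (0:ℝ) ≤ 4*R) _
        have e4 : ((4*R):ℝ)^((d:ℝ)+μ) = 4^((d:ℝ)+μ) * R^((d:ℝ)+μ) :=
          Real.mul_rpow (by norm_num) hR0.le
        have e5 : (ℓ:ℝ)^((d:ℝ)+μ) = ℓ^(d:ℕ) * ℓ^μ := by
          rw [Real.rpow_add hℓ, Real.rpow_natCast]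
        have e6 : ((ℓ^d:ℝ))^(1-1/q) = ℓ^(d:ℕ) * (ℓ^d)^(-(1/q)) := by
          rw [show (1-1/q : ℝ) = 1 + (-(1/q)) by ring, Real.rpow_add (by positivity),
            Real.rpow_one]
        have e7 : ((s*ℓ/2):ℝ)^μ = (s/2)^μ * ℓ^μ := by
          rw [show (s*ℓ/2 : ℝ) = (s/2)*ℓ by ring, Real.mul_rpow (by positivity) hℓ.le]
        rw [hMdef, e1, e2, e3, e4, e5, e6, e7]
        have hR' : (R:ℝ)^((d:ℝ)+μ) ≠ 0 := by positivity
        have h4' : ((4:ℝ))^((d:ℝ)+μ) ≠ 0 := by positivity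
        field_simp
    _ ≤ ENNReal.ofReal ((s/2)^μ * 4^((d:ℝ)+μ) * A) * ENNReal.ofReal ((ℓ^d)^(-(1/q))) *
          hlMax ((cube c ℓ).indicator fun _ => 1) x ^ (((d:ℝ)+μ)/d) := by
        rw [ENNReal.ofReal_mul (by positivity), ENNReal.ofReal_mul (by positivity)]
        exact mul_le_mul_right hpow _
end
end

section
/- Let d ≥ 1, B > 0 and 0 < q ≤ 1. Let K : ℝ^d ∖ {0} → ℂ be continuously differentiable with |∇K(x)| ≤ B |x|^{−(d+1)} for all x ≠ 0. Let Q ⊂ ℝ^d be a cube with center x_Q and side-length ℓ, and let a be an integrable function supported in Q with ∫_{ℝ^d} a(y) dy = 0 and ∫_Q |a(y)| dy ≤ |Q|^{1−1/q}. Then there exists a constant C > 0, depending only on d, such that for every x ∉ 2√d·Q, | ∫_Q K(x−y) a(y) dy | ≤ C B |Q|^{−1/q} ( 𝔐(χ_Q)(x) )^{(d+1)/d}. -/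
open MeasureTheory ENNReal Metric Set
noncomputable section

lemma abs_apply_le_norm {d : ℕ} (v : Rd d) (i : Fin d) : |v i| ≤ ‖v‖ := by
  rw [EuclideanSpace.norm_eq]
  rw [show |v i| = Real.sqrt (‖v i‖^2) by rw [Real.sqrt_sq_eq_abs]; simp]
  apply Real.sqrt_le_sqrt
  exact Finset.single_le_sum (f := fun j => ‖v j‖^2) (fun j _ => by positivity) (Finset.mem_univ i)

lemma norm_le_of_cube {d : ℕ} {c : Rd d} {ℓ : ℝ} (hℓ : 0 ≤ ℓ) {w : Rd d}
    (hw : w ∈ cube c ℓ) : ‖w - c‖ ≤ Real.sqrt d * (ℓ/2) := by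
  rw [EuclideanSpace.norm_eq]
  have : ∀ i : Fin d, ‖(w - c) i‖^2 ≤ (ℓ/2)^2 := by
    intro i
    have h1 := hw i
    have h2 : (w - c) i = w i - c i := rfl
    rw [h2, Real.norm_eq_abs, sq_abs]
    calc (w i - c i)^2 = |w i - c i|^2 := (sq_abs _).symm
      _ ≤ (ℓ/2)^2 := by apply pow_le_pow_left₀ (abs_nonneg _) h1
  calc Real.sqrt (∑ i, ‖(w - c) i‖^2) ≤ Real.sqrt (d * (ℓ/2)^2) := by
        apply Real.sqrt_le_sqrt
        calc ∑ i, ‖(w - c) i‖^2 ≤ ∑ _i : Fin d, (ℓ/2)^2 := Finset.sum_le_sum (fun i _ => this i)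
          _ = d * (ℓ/2)^2 := by simp [mul_comm]
    _ = Real.sqrt d * (ℓ/2) := by
        rw [Real.sqrt_mul (by positivity), Real.sqrt_sq (by positivity)]

lemma cube_isClosed {d : ℕ} (c : Rd d) (ℓ : ℝ) : IsClosed (cube c ℓ) := by
  have : cube c ℓ = ⋂ i, {x : Rd d | |x i - c i| ≤ ℓ/2} := by
    ext x; simp [cube, Set.mem_iInter]
  rw [this]
  refine isClosed_iInter fun i => ?_
  have hc : Continuous fun x : Rd d => |x i - c i| :=
    ((EuclideanSpace.proj i).continuous.sub continuous_const).abs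
  exact isClosed_le hc continuous_const

lemma cube_volume {d : ℕ} (c : Rd d) {ℓ : ℝ} (hℓ : 0 < ℓ) :
    volume (cube c ℓ) = ENNReal.ofReal (ℓ^d) := by
  have hmp := EuclideanSpace.volume_preserving_symm_measurableEquiv_toLp (Fin d)
  have hpre : cube c ℓ = (MeasurableEquiv.toLp 2 (Fin d → ℝ)).symm ⁻¹'
      (Set.univ.pi fun i => Set.Icc (c i - ℓ/2) (c i + ℓ/2)) := by
    ext x
    simp only [cube, Set.mem_setOf_eq, Set.mem_preimage, Set.mem_pi, Set.mem_univ,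
      forall_true_left, Set.mem_Icc]
    have he : ∀ (y : Rd d) (i : Fin d), (MeasurableEquiv.toLp 2 (Fin d → ℝ)).symm y i = y i :=
      fun _ _ => rfl
    simp only [he]
    constructor
    · intro h i; have := h i; rw [abs_le] at this
      constructor <;> [linarith [this.1]; linarith [this.2]]
    · intro h i; rw [abs_le]
      have := h i
      constructor <;> [linarith [this.1]; linarith [this.2]]
  rw [hpre, hmp.measure_preimage]
  · rw [volume_pi_pi]
    simp only [Real.volume_Icc]
    have : ∀ i : Fin d, ENNReal.ofReal (c i + ℓ/2 - (c i - ℓ/2)) = ENNReal.ofReal ℓ := by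
      intro i; congr 1; ring
    simp only [this, Finset.prod_const, Finset.card_univ, Fintype.card_fin]
    rw [← ENNReal.ofReal_pow hℓ.le]
  · exact (MeasurableSet.univ_pi fun i => measurableSet_Icc).nullMeasurableSet

lemma key_eq (d : ℕ) (hd : 1 ≤ d) {ℓ R W : ℝ} (hℓ : 0 < ℓ) (hR : 0 < R) (hW : 0 < W) :
    (R/2)^(-((d:ℝ)+1)) * (Real.sqrt d * (ℓ/2)) * ℓ^d =
    Real.sqrt d * 2^(2*d+1) * W^(((d:ℝ)+1)/d) * ((((2*R)^d*W)⁻¹ * ℓ^d)^(((d:ℝ)+1)/d)) := by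
  have hd0 : (d:ℝ) ≠ 0 := Nat.cast_ne_zero.mpr (by omega)
  have hde : (d:ℝ) * (((d:ℝ)+1)/d) = (d:ℝ)+1 := mul_div_cancel₀ _ hd0
  have h2R : (0:ℝ) < 2*R := by linarith
  have e1 : (((2*R)^d*W)⁻¹ * ℓ^d)^(((d:ℝ)+1)/d)
      = (((2*R)^((d:ℝ)+1) * W^(((d:ℝ)+1)/d))⁻¹) * ℓ^((d:ℝ)+1) := by
    rw [Real.mul_rpow (by positivity) (by positivity),
        Real.inv_rpow (by positivity),
        Real.mul_rpow (by positivity) hW.le,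
        ← Real.rpow_natCast (2*R) d, ← Real.rpow_mul h2R.le, hde,
        ← Real.rpow_natCast ℓ d, ← Real.rpow_mul hℓ.le, hde]
  rw [e1]
  have e2 : (R/2)^(-((d:ℝ)+1)) = (R^((d:ℝ)+1) / 2^((d:ℝ)+1))⁻¹ := by
    rw [Real.rpow_neg (by positivity), Real.div_rpow hR.le (by norm_num)]
  have e3 : (2*R)^((d:ℝ)+1) = 2^((d:ℝ)+1) * R^((d:ℝ)+1) := Real.mul_rpow (by norm_num) hR.le
  have e4 : (2:ℝ)^((d:ℝ)+1) = (2:ℝ)^(d+1 : ℕ) := by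
    rw [← Real.rpow_natCast 2 (d+1)]; push_cast; ring_nf
  have e5 : ℓ^((d:ℝ)+1) = ℓ^(d+1:ℕ) := by
    rw [← Real.rpow_natCast ℓ (d+1)]; push_cast; ring_nf
  have hRp : (0:ℝ) < R^((d:ℝ)+1) := Real.rpow_pos_of_pos hR _
  have hWp : (0:ℝ) < W^(((d:ℝ)+1)/d) := Real.rpow_pos_of_pos hW _
  rw [e2, e3, e4, e5]
  have h2p : (0:ℝ) < (2:ℝ)^(d+1:ℕ) := by positivity
  field_simp
  ring

lemma cube_convex_comb {d : ℕ} {c : Rd d} {ℓ : ℝ} {y : Rd d} (hy : y ∈ cube c ℓ)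
    {a b : ℝ} (ha : 0 ≤ a) (hb : 0 ≤ b) (hab : a + b = 1) :
    a • c + b • y ∈ cube c ℓ := by
  intro i
  have h1 : (a • c + b • y) i - c i = b * (y i - c i) := by
    have : (a • c + b • y) i = a * c i + b * y i := rfl
    rw [this]; linear_combination (c i) * hab
  rw [h1, abs_mul, abs_of_nonneg hb]
  have := hy i
  have hb1 : b ≤ 1 := by linarith
  calc b * |y i - c i| ≤ 1 * (ℓ/2) := by
        apply mul_le_mul hb1 this (abs_nonneg _) zero_le_one
    _ = ℓ/2 := one_mul _

lemma seg_mem {d : ℕ} {c : Rd d} {ℓ : ℝ} {x y z : Rd d} (hy : y ∈ cube c ℓ)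
    (hz : z ∈ segment ℝ (x - c) (x - y)) :
    ∃ w ∈ cube c ℓ, z = x - w := by
  obtain ⟨a, b, ha, hb, hab, rfl⟩ := hz
  refine ⟨a • c + b • y, cube_convex_comb hy ha hb hab, ?_⟩
  have : a • (x - c) + b • (x - y) = (a+b) • x - (a • c + b • y) := by
    rw [smul_sub, smul_sub, add_smul]; abel
  rw [this, hab, one_smul]

lemma mvt_bound {d : ℕ} {B : ℝ} (hB : 0 < B) {K : Rd d → ℂ}
    (hK : ContDiffOn ℝ 1 K {0}ᶜ)
    (hK' : ∀ x : Rd d, x ≠ 0 → ‖fderivWithin ℝ K {0}ᶜ x‖ ≤ B * ‖x‖ ^ (-((d : ℝ) + 1)))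
    {c : Rd d} {ℓ : ℝ} (hℓ : 0 < ℓ) {x : Rd d}
    (hR : Real.sqrt d * ℓ < ‖x - c‖) {y : Rd d} (hy : y ∈ cube c ℓ) :
    ‖K (x - y) - K (x - c)‖ ≤
      B * (‖x - c‖/2) ^ (-((d:ℝ)+1)) * (Real.sqrt d * (ℓ/2)) := by
  set R := ‖x - c‖ with hRdef
  have hd1 : (1:ℝ) ≤ Real.sqrt d ∨ d = 0 := by
    rcases Nat.eq_zero_or_pos d with h | h
    · exact Or.inr h
    · left
      have : (1:ℝ) ≤ (d:ℝ) := by exact_mod_cast h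
      calc (1:ℝ) = Real.sqrt 1 := (Real.sqrt_one).symm
        _ ≤ Real.sqrt d := Real.sqrt_le_sqrt this
  have hRpos : 0 < R := by
    have h0 : 0 ≤ Real.sqrt d * ℓ := by positivity
    linarith
  have hlow : ∀ w ∈ cube c ℓ, R/2 ≤ ‖x - w‖ := by
    intro w hw
    have h1 : ‖w - c‖ ≤ Real.sqrt d * (ℓ/2) := norm_le_of_cube hℓ.le hw
    have h2 : R - ‖x - w‖ ≤ ‖w - c‖ := by
      calc R - ‖x - w‖ ≤ ‖(x - c) - (x - w)‖ := norm_sub_norm_le _ _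
        _ = ‖w - c‖ := by rw [show (x - c) - (x - w) = w - c by abel]
    have : Real.sqrt d * (ℓ/2) ≤ R/2 := by linarith
    linarith
  have hc : c ∈ cube c ℓ := by intro i; simp [abs_of_nonneg]; positivity
  set s := segment ℝ (x - c) (x - y) with hs
  have hsub : ∀ z ∈ s, R/2 ≤ ‖z‖ := by
    intro z hz
    obtain ⟨w, hw, rfl⟩ := seg_mem hy hz
    exact hlow w hw
  have hsne : ∀ z ∈ s, z ≠ 0 := by
    intro z hz h0
    have := hsub z hz
    rw [h0, norm_zero] at this
    linarith
  have hsub' : s ⊆ {0}ᶜ := fun z hz => hsne z hz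
  have hdiff := hK.differentiableOn one_ne_zero
  have key := Convex.norm_image_sub_le_of_norm_hasFDerivWithin_le
    (f := K) (f' := fun z => fderivWithin ℝ K {0}ᶜ z)
    (C := B * (R/2) ^ (-((d:ℝ)+1))) (s := s)
    (fun z hz => ((hdiff z (hsub' hz)).hasFDerivWithinAt).mono hsub')
    (fun z hz => by
      have h1 := hK' z (hsne z hz)
      have h2 : ‖z‖ ^ (-((d:ℝ)+1)) ≤ (R/2) ^ (-((d:ℝ)+1)) := by
        apply Real.rpow_le_rpow_of_nonpos (by linarith) (hsub z hz)
        have : (0:ℝ) ≤ (d:ℝ) := Nat.cast_nonneg d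
        linarith
      calc ‖fderivWithin ℝ K {0}ᶜ z‖ ≤ B * ‖z‖ ^ (-((d:ℝ)+1)) := h1
        _ ≤ B * (R/2) ^ (-((d:ℝ)+1)) := by
            apply mul_le_mul_of_nonneg_left h2 hB.le)
    (convex_segment _ _)
    (left_mem_segment ℝ _ _) (right_mem_segment ℝ _ _)
  calc ‖K (x - y) - K (x - c)‖ ≤ B * (R/2) ^ (-((d:ℝ)+1)) * ‖(x - y) - (x - c)‖ := key
    _ = B * (R/2) ^ (-((d:ℝ)+1)) * ‖y - c‖ := by
        rw [show (x - y) - (x - c) = -(y - c) by abel, norm_neg]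
    _ ≤ B * (R/2) ^ (-((d:ℝ)+1)) * (Real.sqrt d * (ℓ/2)) := by
        apply mul_le_mul_of_nonneg_left (norm_le_of_cube hℓ.le hy)
        positivity

/-- Pointwise estimate for convolution kernels: if `K` is `C¹` away from the origin with
`|∇K(x)| ≤ B |x|^{−(d+1)}`, and `a` is supported in the cube `Q` with `∫ a = 0` and
`∫_Q |a| ≤ |Q|^{1−1/q}`, then for `x ∉ 2√d·Q`,
`|∫_Q K(x−y) a(y) dy| ≤ C B |Q|^{−1/q} (𝔐 χ_Q (x))^{(d+1)/d}`,
with `C` depending only on `d`. -/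
theorem statement12 {d : ℕ} (hd : 1 ≤ d) :
    ∃ C : ℝ, 0 < C ∧
      ∀ B : ℝ, 0 < B → ∀ q : ℝ, 0 < q → q ≤ 1 →
      ∀ K : Rd d → ℂ, ContDiffOn ℝ 1 K {0}ᶜ →
        (∀ x : Rd d, x ≠ 0 →
          ‖fderivWithin ℝ K {0}ᶜ x‖ ≤ B * ‖x‖ ^ (-((d : ℝ) + 1))) →
      ∀ (c : Rd d) (ℓ : ℝ), 0 < ℓ →
      ∀ a : Rd d → ℂ, IntegrableOn a (cube c ℓ) → (∀ x ∉ cube c ℓ, a x = 0) →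
        (∫ y in cube c ℓ, a y) = 0 →
        (∫ y in cube c ℓ, ‖a y‖) ≤ (ℓ ^ d) ^ (1 - 1 / q) →
      ∀ x ∉ cube c (2 * Real.sqrt d * ℓ),
        (‖∫ y in cube c ℓ, K (x - y) * a y‖₊ : ℝ≥0∞) ≤
          ENNReal.ofReal (C * B) * ENNReal.ofReal ((ℓ ^ d) ^ (-(1 / q))) *
            hlMax ((cube c ℓ).indicator fun _ => 1) x ^ (((d : ℝ) + 1) / d) := by
  haveI : Nonempty (Fin d) := ⟨⟨0, by omega⟩⟩
  set ω : ℝ≥0∞ := volume (ball (0 : Rd d) 1) with hω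
  have hωpos : 0 < ω := measure_ball_pos volume 0 one_pos
  have hωlt : ω < ⊤ := measure_ball_lt_top
  set W : ℝ := ω.toReal with hWdef
  have hW : 0 < W := ENNReal.toReal_pos hωpos.ne' hωlt.ne
  set E : ℝ := ((d:ℝ)+1)/d with hE
  have hEnn : 0 ≤ E := by positivity
  refine ⟨Real.sqrt d * 2^(2*d+1) * W^E, by
    have : (0:ℝ) < Real.sqrt d := Real.sqrt_pos.mpr (by exact_mod_cast hd)
    positivity, ?_⟩
  intro B hB q hq hq1 K hK hK' c ℓ hℓ a ha ha0 haint habd x hx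
  set C : ℝ := Real.sqrt d * 2^(2*d+1) * W^E with hC
  set Q : Set (Rd d) := cube c ℓ with hQ
  have hQmeas : MeasurableSet Q := (cube_isClosed c ℓ).measurableSet
  -- x is far from the cube
  have hsd : (0:ℝ) < Real.sqrt d := Real.sqrt_pos.mpr (by exact_mod_cast hd)
  obtain ⟨i, hi⟩ : ∃ i, Real.sqrt d * ℓ < |x i - c i| := by
    by_contra h
    push_neg at h
    exact hx fun i => by
      have := h i
      calc |x i - c i| ≤ Real.sqrt d * ℓ := this
        _ = 2 * Real.sqrt d * ℓ / 2 := by ring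
  set R : ℝ := ‖x - c‖ with hRdef
  have hRgt : Real.sqrt d * ℓ < R := by
    calc Real.sqrt d * ℓ < |x i - c i| := hi
      _ = |(x - c) i| := rfl
      _ ≤ ‖x - c‖ := abs_apply_le_norm _ _
  have hRpos : 0 < R := lt_trans (by positivity) hRgt
  -- distance from x to cube points
  have hlow : ∀ w ∈ Q, R/2 ≤ ‖x - w‖ := by
    intro w hw
    have h1 : ‖w - c‖ ≤ Real.sqrt d * (ℓ/2) := norm_le_of_cube hℓ.le hw
    have h2 : R - ‖x - w‖ ≤ ‖w - c‖ := by
      calc R - ‖x - w‖ ≤ ‖(x - c) - (x - w)‖ := norm_sub_norm_le _ _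
        _ = ‖w - c‖ := by rw [show (x - c) - (x - w) = w - c by abel]
    have : Real.sqrt d * (ℓ/2) ≤ R/2 := by linarith
    linarith
  -- integrability of K(x-·)*a on Q
  have hKcont : ContinuousOn (fun y => K (x - y)) Q := by
    apply hK.continuousOn.comp (Continuous.continuousOn (by continuity))
    intro y hy
    have := hlow y hy
    simp only [Set.mem_compl_iff, Set.mem_singleton_iff]
    intro h0
    rw [h0, norm_zero] at this; linarith
  have hQbdd : Bornology.IsBounded Q := by
    apply (isBounded_closedBall (x := c) (r := Real.sqrt d * (ℓ/2))).subset
    intro w hw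
    rw [mem_closedBall, dist_eq_norm]
    exact norm_le_of_cube hℓ.le hw
  have hQcomp : IsCompact Q := Metric.isCompact_of_isClosed_isBounded (cube_isClosed c ℓ) hQbdd
  obtain ⟨Mb, hMb⟩ := hQcomp.exists_bound_of_continuousOn hKcont
  have hKmeas : AEStronglyMeasurable (fun y => K (x - y)) (volume.restrict Q) :=
    hKcont.aestronglyMeasurable hQmeas
  have hKint : IntegrableOn (fun y => K (x - y) * a y) Q := by
    apply Integrable.bdd_mul (c := Mb) ha hKmeas
    filter_upwards [ae_restrict_mem hQmeas] with y hy
    exact hMb y hy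
  have hKcint : IntegrableOn (fun y => K (x - c) * a y) Q := ha.const_mul _
  -- cancellation
  set M : ℝ := B * (R/2) ^ (-((d:ℝ)+1)) * (Real.sqrt d * (ℓ/2)) with hM
  have hMnn : 0 ≤ M := by positivity
  have hsplit : (∫ y in Q, K (x - y) * a y) = ∫ y in Q, (K (x - y) - K (x - c)) * a y := by
    have h1 : (∫ y in Q, (K (x - y) - K (x - c)) * a y)
        = (∫ y in Q, K (x - y) * a y) - ∫ y in Q, K (x - c) * a y := by
      rw [← integral_sub hKint hKcint]
      congr 1; ext y; ring
    rw [h1, integral_const_mul, haint, mul_zero, sub_zero]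
  have hnormJ : ‖∫ y in Q, K (x - y) * a y‖ ≤ M * (ℓ^d)^(1 - 1/q) := by
    rw [hsplit]
    have h2 : ‖∫ y in Q, (K (x - y) - K (x - c)) * a y‖ ≤ ∫ y in Q, M * ‖a y‖ := by
      apply norm_integral_le_of_norm_le (ha.norm.const_mul M)
      filter_upwards [ae_restrict_mem hQmeas] with y hy
      rw [norm_mul]
      exact mul_le_mul_of_nonneg_right (mvt_bound hB hK hK' hℓ hRgt hy) (norm_nonneg _)
    calc ‖∫ y in Q, (K (x - y) - K (x - c)) * a y‖ ≤ ∫ y in Q, M * ‖a y‖ := h2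
      _ = M * ∫ y in Q, ‖a y‖ := integral_const_mul M _
      _ ≤ M * (ℓ^d)^(1 - 1/q) := mul_le_mul_of_nonneg_left habd hMnn
  -- maximal function lower bound
  have h2R : (0:ℝ) < 2*R := by linarith
  have hQball : Q ⊆ ball x (2*R) := by
    intro w hw
    rw [mem_ball, dist_eq_norm, show w - x = -(x - w) by abel, norm_neg]
    have h1 : ‖w - c‖ ≤ Real.sqrt d * (ℓ/2) := norm_le_of_cube hℓ.le hw
    have h2 : ‖x - w‖ ≤ ‖x - c‖ + ‖w - c‖ := by
      calc ‖x - w‖ = ‖(x - c) + (c - w)‖ := by rw [show (x - c) + (c - w) = x - w by abel]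
        _ ≤ ‖x - c‖ + ‖c - w‖ := norm_add_le _ _
        _ = ‖x - c‖ + ‖w - c‖ := by rw [norm_sub_rev c w]
    have h3 : Real.sqrt d * (ℓ/2) < R/2 := by linarith
    linarith
  have hballvol : volume (ball x (2*R)) = ENNReal.ofReal ((2*R)^d) * ω := by
    rw [Measure.addHaar_ball volume x h2R.le, finrank_euclideanSpace_fin]
  have hlint : (∫⁻ y in ball x (2*R), (Q.indicator fun _ => (1:ℝ≥0∞)) y) = volume Q := by
    rw [lintegral_indicator hQmeas, Measure.restrict_restrict hQmeas,
        Set.inter_eq_self_of_subset_left hQball]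
    simp
  have hmax : ENNReal.ofReal (((2*R)^d * W)⁻¹ * ℓ^d) ≤ hlMax (Q.indicator fun _ => 1) x := by
    have step : (volume (ball x (2*R)))⁻¹ * (∫⁻ y in ball x (2*R), (Q.indicator fun _ => (1:ℝ≥0∞)) y)
        ≤ hlMax (Q.indicator fun _ => 1) x :=
      le_iSup₂ (f := fun r (_ : 0 < r) =>
        (volume (ball x r))⁻¹ * ∫⁻ y in ball x r, (Q.indicator fun _ => (1:ℝ≥0∞)) y) (2*R) h2R
    refine le_trans (le_of_eq ?_) step
    rw [hlint, hballvol, cube_volume c hℓ]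
    rw [show ω = ENNReal.ofReal W from (ENNReal.ofReal_toReal hωlt.ne).symm]
    rw [← ENNReal.ofReal_mul (by positivity), ← ENNReal.ofReal_inv_of_pos (by positivity),
        ← ENNReal.ofReal_mul (by positivity)]
  -- put everything together
  have hXpos : (0:ℝ) < ((2*R)^d * W)⁻¹ * ℓ^d := by positivity
  calc (‖∫ y in Q, K (x - y) * a y‖₊ : ℝ≥0∞)
      = ENNReal.ofReal ‖∫ y in Q, K (x - y) * a y‖ := (ofReal_norm _).symm
    _ ≤ ENNReal.ofReal (M * (ℓ^d)^(1 - 1/q)) := ENNReal.ofReal_le_ofReal hnormJ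
    _ = ENNReal.ofReal (C * B * (ℓ^d)^(-(1/q)) * ((((2*R)^d * W)⁻¹ * ℓ^d)^E)) := by
        congr 1
        have hkey := key_eq d hd hℓ hRpos hW
        have hsplit2 : ((ℓ:ℝ)^d)^(1 - 1/q) = ℓ^d * (ℓ^d)^(-(1/q)) := by
          rw [show (1 - 1/q : ℝ) = 1 + (-(1/q)) by ring,
              Real.rpow_add (by positivity), Real.rpow_one]
        rw [hM, hsplit2, hC, hE]
        linear_combination (B * (ℓ^d)^(-(1/q))) * hkey
    _ = ENNReal.ofReal (C * B) * ENNReal.ofReal ((ℓ^d)^(-(1/q))) *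
          ENNReal.ofReal ((((2*R)^d * W)⁻¹ * ℓ^d)^E) := by
        rw [← ENNReal.ofReal_mul (by positivity), ← ENNReal.ofReal_mul (by positivity)]
    _ = ENNReal.ofReal (C * B) * ENNReal.ofReal ((ℓ^d)^(-(1/q))) *
          (ENNReal.ofReal (((2*R)^d * W)⁻¹ * ℓ^d)) ^ E := by
        rw [ENNReal.ofReal_rpow_of_pos hXpos]
    _ ≤ ENNReal.ofReal (C * B) * ENNReal.ofReal ((ℓ^d)^(-(1/q))) *
          hlMax (Q.indicator fun _ => 1) x ^ E := by
        exact mul_le_mul_right (ENNReal.rpow_le_rpow hmax hEnn) _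
end
end

section
/- Let d ≥ 1, 0 < σ < d, 0 < w ≤ h < ∞ and 0 < u < ∞ with 1/u = 1/w − σ/d. Let (Q^m)_{m≥0} be pairwise distinct dyadic cubes of ℝ^d, each of Lebesgue measure at most 1 (so Q^m has side-length ℓ_m = 2^{−υ_m} with υ_m ≥ 0), and let (δ_m)_{m≥0} be nonnegative reals such that ‖ Σ_{m≥0} δ_m χ_{Q^m} ‖_{w,h} ≤ 1. Then for every x ∈ ℝ^d, Σ_{m≥0} δ_m ℓ_m^σ χ_{Q^m}(x) ≤ C ( Σ_{m≥0} δ_m χ_{Q^m}(x) )^{w/u}, where C = 1/(1 − 2^{σ − d/w}) + 1/(1 − 2^{−σ}). -/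
open MeasureTheory ENNReal Metric Set
noncomputable section

/-- The dyadic cube `2^{−υ} Π_i [m_i, m_i + 1)`. -/
def dyadicCube (d : ℕ) (υ : ℕ) (m : Fin d → ℤ) : Set (Rd d) :=
  {x | ∀ i, (m i : ℝ) / 2 ^ υ ≤ x i ∧ x i < ((m i : ℝ) + 1) / 2 ^ υ}

lemma dyadicCube_eq_preimage (d υ : ℕ) (m : Fin d → ℤ) :
    dyadicCube d υ m = ((MeasurableEquiv.toLp 2 (Fin d → ℝ)).symm) ⁻¹'
      (Set.univ.pi fun i => Ico ((m i : ℝ) / 2 ^ υ) (((m i : ℝ) + 1) / 2 ^ υ)) := by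
  ext x
  simp [dyadicCube, Set.mem_pi, MeasurableEquiv.coe_toLp_symm]

lemma volume_dyadicCube (d υ : ℕ) (m : Fin d → ℤ) :
    volume (dyadicCube d υ m) = ENNReal.ofReal ((2 ^ υ : ℝ)⁻¹) ^ d := by
  rw [dyadicCube_eq_preimage,
    (EuclideanSpace.volume_preserving_symm_measurableEquiv_toLp (Fin d)).measure_preimage
      ((MeasurableSet.univ_pi fun i => measurableSet_Ico).nullMeasurableSet),
    volume_pi_pi]
  have : ∀ i : Fin d, volume (Ico ((m i : ℝ) / 2 ^ υ) (((m i : ℝ) + 1) / 2 ^ υ))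
      = ENNReal.ofReal ((2 ^ υ : ℝ)⁻¹) := by
    intro i
    rw [Real.volume_Ico]
    congr 1
    field_simp
    ring
  simp [this]

lemma measurableSet_dyadicCube (d υ : ℕ) (m : Fin d → ℤ) :
    MeasurableSet (dyadicCube d υ m) := by
  rw [dyadicCube_eq_preimage]
  exact ((MeasurableEquiv.toLp 2 (Fin d → ℝ)).symm).measurable
    (MeasurableSet.univ_pi fun i => measurableSet_Ico)

lemma dyadic_subset_unitCube (d υ : ℕ) (m : Fin d → ℤ) :
    dyadicCube d υ m ⊆ unitCube d (fun i => ⌊(m i : ℝ) / 2 ^ υ⌋) := by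
  intro x hx i
  have h2 : (0:ℝ) < 2 ^ υ := by positivity
  constructor
  · exact le_trans (Int.floor_le _) (hx i).1
  · refine lt_of_lt_of_le (hx i).2 ?_
    have h1 : ((m i : ℝ)) / 2 ^ υ < ⌊(m i : ℝ) / 2 ^ υ⌋ + 1 := Int.lt_floor_add_one _
    have h3 : (m i : ℝ) < (⌊(m i : ℝ) / 2 ^ υ⌋ + 1) * 2 ^ υ := by
      rw [div_lt_iff₀ h2] at h1; exact h1
    have h4 : (m i : ℤ) < (⌊(m i : ℝ) / 2 ^ υ⌋ + 1) * 2 ^ υ := by exact_mod_cast h3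
    have h5 : (m i : ℤ) + 1 ≤ (⌊(m i : ℝ) / 2 ^ υ⌋ + 1) * 2 ^ υ := h4
    have h6 : ((m i : ℝ)) + 1 ≤ ((⌊(m i : ℝ) / 2 ^ υ⌋ : ℝ) + 1) * 2 ^ υ := by exact_mod_cast h5
    rw [div_le_iff₀ h2]
    push_cast
    linarith

lemma dyadic_same_gen {d : ℕ} {υ : ℕ} {m m' : Fin d → ℤ} {x : Rd d}
    (h : x ∈ dyadicCube d υ m) (h' : x ∈ dyadicCube d υ m') : m = m' := by
  funext i
  have h2 : (0:ℝ) < 2 ^ υ := by positivity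
  have key : ∀ m₀ : Fin d → ℤ, x ∈ dyadicCube d υ m₀ → m₀ i = ⌊2 ^ υ * x i⌋ := by
    intro m₀ hm
    have ha := (hm i).1
    have hb := (hm i).2
    rw [div_le_iff₀ h2] at ha
    rw [lt_div_iff₀ h2] at hb
    symm
    rw [Int.floor_eq_iff]
    constructor <;> push_cast <;> nlinarith
  rw [key m h, key m' h']

lemma amalgam_term_le {d : ℕ} {w h : ℝ} (hw : 0 < w) (hwh : w ≤ h) {F : Rd d → ℝ≥0∞}
    (hF : amalgamNorm d w h F ≤ 1) (k : Fin d → ℤ) :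
    ∫⁻ x in unitCube d k, F x ^ w ≤ 1 := by
  have hh : 0 < h := lt_of_lt_of_le hw hwh
  have hT1 : ∑' k : Fin d → ℤ, (∫⁻ x in unitCube d k, F x ^ w) ^ (h / w) ≤ 1 := by
    have h1 : (amalgamNorm d w h F) ^ h ≤ 1 ^ h := ENNReal.rpow_le_rpow hF hh.le
    rwa [amalgamNorm, ← ENNReal.rpow_mul, one_div_mul_cancel hh.ne', ENNReal.rpow_one,
      ENNReal.one_rpow] at h1
  have h2 : (∫⁻ x in unitCube d k, F x ^ w) ^ (h / w) ≤ 1 :=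
    le_trans (ENNReal.le_tsum k) hT1
  have h3 := ENNReal.rpow_le_rpow h2 (div_pos hw hh).le
  rwa [← ENNReal.rpow_mul, div_mul_div_comm, mul_comm h w, div_self (by positivity),
    ENNReal.rpow_one, ENNReal.one_rpow] at h3

lemma two_pow_inv_rpow (υ : ℕ) (σ : ℝ) :
    (((2:ℝ) ^ υ)⁻¹) ^ σ = (2:ℝ) ^ (-(υ:ℝ) * σ) := by
  rw [← Real.rpow_natCast 2 υ, ← Real.rpow_neg (by norm_num), ← Real.rpow_mul (by norm_num)]

lemma two_rpow_nat (υ : ℕ) (c : ℝ) : ((2:ℝ) ^ c) ^ υ = (2:ℝ) ^ ((υ:ℝ) * c) := by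
  rw [← Real.rpow_natCast ((2:ℝ) ^ c) υ, ← Real.rpow_mul (by norm_num), mul_comm]

set_option maxHeartbeats 1000000 in
/-- Pointwise estimate in the proof of the scaling lemma, for pairwise distinct dyadic
cubes of measure at most `1` (generations `υ_m ≥ 0`, side-lengths `ℓ_m = 2^{−υ_m}`): if
`‖Σ_m δ_m χ_{Q^m}‖_{w,h} ≤ 1` then for every `x`,
`Σ_m δ_m ℓ_m^σ χ_{Q^m}(x) ≤ C (Σ_m δ_m χ_{Q^m}(x))^{w/u}` with
`C = 1/(1 − 2^{σ−d/w}) + 1/(1 − 2^{−σ})`. -/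
theorem statement16 {d : ℕ} (hd : 1 ≤ d) (σ w h u : ℝ) (hσ0 : 0 < σ) (hσd : σ < d)
    (hw : 0 < w) (hwh : w ≤ h) (hu : 0 < u) (hueq : 1 / u = 1 / w - σ / d)
    (υ : ℕ → ℕ) (m : ℕ → Fin d → ℤ)
    (hdist : Function.Injective fun n => (υ n, m n))
    (δ : ℕ → ℝ) (hδ : ∀ n, 0 ≤ δ n)
    (hF : amalgamNorm d w h (fun x =>
        ∑' n, ENNReal.ofReal (δ n) *
          (dyadicCube d (υ n) (m n)).indicator (fun _ => 1) x) ≤ 1) :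
    ∀ x : Rd d,
      ∑' n, ENNReal.ofReal (δ n) * ENNReal.ofReal ((((2 : ℝ) ^ υ n)⁻¹) ^ σ) *
          (dyadicCube d (υ n) (m n)).indicator (fun _ => 1) x ≤
        ENNReal.ofReal
            (1 / (1 - (2 : ℝ) ^ (σ - (d : ℝ) / w)) + 1 / (1 - (2 : ℝ) ^ (-σ))) *
          (∑' n, ENNReal.ofReal (δ n) *
              (dyadicCube d (υ n) (m n)).indicator (fun _ => 1) x) ^ (w / u) := by
  intro x
  -- numeric facts
  have hd0 : (0:ℝ) < d := by exact_mod_cast Nat.lt_of_lt_of_le Nat.zero_lt_one hd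
  have hu' : (0:ℝ) < 1/w - σ/d := by rw [← hueq]; positivity
  have hσdw : σ < d / w := by
    rw [lt_div_iff₀ hw]
    have h1 : σ / d < 1 / w := by linarith
    rw [div_lt_div_iff₀ hd0 hw] at h1
    linarith
  have hwu : w / u = 1 - σ * w / d := by
    have h1 : w * (1/u) = w * (1/w - σ/d) := by rw [hueq]
    have h2 : w * (1/w - σ/d) = 1 - σ * w / d := by field_simp
    rw [h2] at h1
    rw [← h1]; ring
  have hwu_pos : 0 < w / u := div_pos hw hu
  have hwu_le1 : w / u ≤ 1 := by
    rw [hwu]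
    have : 0 ≤ σ * w / d := by positivity
    linarith
  have hr1 : (2:ℝ) ^ (σ - (d:ℝ)/w) < 1 :=
    Real.rpow_lt_one_of_one_lt_of_neg one_lt_two (by linarith)
  have hr1' : (0:ℝ) < (2:ℝ) ^ (σ - (d:ℝ)/w) := Real.rpow_pos_of_pos two_pos _
  have hr2 : (2:ℝ) ^ (-σ) < 1 :=
    Real.rpow_lt_one_of_one_lt_of_neg one_lt_two (by linarith)
  have hr2' : (0:ℝ) < (2:ℝ) ^ (-σ) := Real.rpow_pos_of_pos two_pos _
  have hC1 : (1:ℝ) ≤ 1 / (1 - (2:ℝ) ^ (σ - (d:ℝ)/w)) := by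
    rw [le_div_iff₀ (by linarith)]; linarith
  have hC2 : (1:ℝ) ≤ 1 / (1 - (2:ℝ) ^ (-σ)) := by
    rw [le_div_iff₀ (by linarith)]; linarith
  set C := 1 / (1 - (2:ℝ) ^ (σ - (d:ℝ)/w)) + 1 / (1 - (2:ℝ) ^ (-σ)) with hCdef
  have hC0 : (0:ℝ) < C := by rw [hCdef]; linarith
  have hCge1 : (1:ℝ≥0∞) ≤ ENNReal.ofReal C := ENNReal.one_le_ofReal.mpr (by rw [hCdef]; linarith)
  clear_value C
  -- the delta bound from the amalgam hypothesis
  have hδ2 : ∀ n, ENNReal.ofReal (δ n) ≤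
      ENNReal.ofReal ((2:ℝ) ^ ((υ n : ℝ) * ((d:ℝ) / w))) := by
    intro n
    have hvol : ENNReal.ofReal (δ n) ^ w * volume (dyadicCube d (υ n) (m n)) ≤ 1 := by
      calc ENNReal.ofReal (δ n) ^ w * volume (dyadicCube d (υ n) (m n))
          = ∫⁻ _ in dyadicCube d (υ n) (m n), ENNReal.ofReal (δ n) ^ w :=
            (setLIntegral_const _ _).symm
        _ ≤ ∫⁻ y in dyadicCube d (υ n) (m n),
              (∑' n', ENNReal.ofReal (δ n') *
                (dyadicCube d (υ n') (m n')).indicator (fun _ => 1) y) ^ w := by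
            apply setLIntegral_mono' (measurableSet_dyadicCube _ _ _)
            intro y hy
            apply ENNReal.rpow_le_rpow _ hw.le
            have h1 : ENNReal.ofReal (δ n) *
                (dyadicCube d (υ n) (m n)).indicator (fun _ => 1) y ≤
                ∑' n', ENNReal.ofReal (δ n') *
                  (dyadicCube d (υ n') (m n')).indicator (fun _ => 1) y :=
              ENNReal.le_tsum n
            simpa [Set.indicator_of_mem hy] using h1
        _ ≤ ∫⁻ y in unitCube d (fun i => ⌊(m n i : ℝ) / 2 ^ (υ n)⌋),
              (∑' n', ENNReal.ofReal (δ n') *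
                (dyadicCube d (υ n') (m n')).indicator (fun _ => 1) y) ^ w :=
            lintegral_mono_set (dyadic_subset_unitCube d (υ n) (m n))
        _ ≤ 1 := amalgam_term_le hw hwh hF _
    rw [volume_dyadicCube] at hvol
    have hVpos : (0:ℝ) < ((2:ℝ) ^ (υ n))⁻¹ ^ d := by positivity
    rw [← ENNReal.ofReal_pow (by positivity) d] at hvol
    have h1 : ENNReal.ofReal (δ n) ^ w ≤ (ENNReal.ofReal (((2:ℝ) ^ (υ n))⁻¹ ^ d))⁻¹ :=
      ENNReal.le_inv_iff_mul_le.mpr hvol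
    rw [← ENNReal.ofReal_inv_of_pos hVpos] at h1
    have h2 := ENNReal.rpow_le_rpow h1 (by positivity : (0:ℝ) ≤ 1/w)
    rw [← ENNReal.rpow_mul, mul_one_div, div_self hw.ne', ENNReal.rpow_one,
      ENNReal.ofReal_rpow_of_pos (by positivity)] at h2
    refine le_trans h2 (le_of_eq ?_)
    congr 1
    rw [← inv_pow, inv_inv, ← pow_mul, ← Real.rpow_natCast 2 (υ n * d),
      ← Real.rpow_mul (by norm_num)]
    congr 1
    push_cast
    ring
  -- pointwise bound a ≤ b
  have hab : ∀ n, ENNReal.ofReal (δ n) * ENNReal.ofReal ((((2 : ℝ) ^ υ n)⁻¹) ^ σ) * (dyadicCube d (υ n) (m n)).indicator (fun _ => 1) x ≤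
      ENNReal.ofReal (δ n) * (dyadicCube d (υ n) (m n)).indicator (fun _ => 1) x := by
    intro n
    have h1 : ENNReal.ofReal ((((2:ℝ) ^ υ n)⁻¹) ^ σ) ≤ 1 := by
      rw [ENNReal.ofReal_le_one, two_pow_inv_rpow]
      apply Real.rpow_le_one_of_one_le_of_nonpos one_le_two
      have h2 : (0:ℝ) ≤ (υ n : ℝ) * σ := by positivity
      linarith
    have h3 := mul_le_mul' (mul_le_mul' (le_refl (ENNReal.ofReal (δ n))) h1)
      (le_refl ((dyadicCube d (υ n) (m n)).indicator (fun _ => (1:ℝ≥0∞)) x))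
    simpa using h3
  set S := ∑' n, ENNReal.ofReal (δ n) * (dyadicCube d (υ n) (m n)).indicator (fun _ => 1) x
    with hSdef
  clear_value S
  have hsum_le_S : (∑' n, ENNReal.ofReal (δ n) * ENNReal.ofReal ((((2 : ℝ) ^ υ n)⁻¹) ^ σ) * (dyadicCube d (υ n) (m n)).indicator (fun _ => 1) x) ≤ S :=
    by rw [hSdef]; exact ENNReal.tsum_le_tsum hab
  rcases le_or_gt S 1 with hS1 | hS1
  · refine le_trans hsum_le_S ?_
    calc S = S ^ (1:ℝ) := (ENNReal.rpow_one S).symm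
      _ ≤ S ^ (w/u) := ENNReal.rpow_le_rpow_of_exponent_ge hS1 hwu_le1
      _ ≤ ENNReal.ofReal C * S ^ (w/u) := le_mul_of_one_le_left zero_le hCge1
  rcases eq_top_or_lt_top S with hStop | hSlt
  · rw [hStop, ENNReal.top_rpow_of_pos hwu_pos, ENNReal.mul_top
      (ENNReal.ofReal_pos.mpr hC0).ne']
    exact le_top
  -- main case : 1 < S < ∞
  set s := S.toReal with hsdef
  have hS_eq : S = ENNReal.ofReal s := (ENNReal.ofReal_toReal hSlt.ne).symm
  have hs1 : (1:ℝ) < s := by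
    have h1 := (ENNReal.toReal_lt_toReal (by simp) hSlt.ne).mpr hS1
    simpa using h1
  have hs0 : (0:ℝ) < s := lt_trans one_pos hs1
  clear_value s
  set c := (d:ℝ)/w - σ with hcdef
  have hc : 0 < c := by rw [hcdef]; linarith
  clear_value c
  set x0 := (w/(d:ℝ)) * Real.logb 2 s with hx0def
  have hx0 : 0 < x0 := mul_pos (div_pos hw hd0) (Real.logb_pos one_lt_two hs1)
  set j0 := ⌈x0⌉₊ with hj0def
  have hj0ge : x0 ≤ (j0:ℝ) := Nat.le_ceil x0
  have hj0lt : (j0:ℝ) < x0 + 1 := Nat.ceil_lt_add_one hx0.le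
  clear_value j0
  have h2x0 : (2:ℝ) ^ x0 = s ^ (w/(d:ℝ)) := by
    rw [hx0def, mul_comm, Real.rpow_mul (by norm_num), Real.rpow_logb two_pos (by norm_num) hs0]
  clear_value x0
  have hwdc : (w/(d:ℝ)) * c = w/u := by rw [hcdef, hwu]; field_simp
  -- split the sum at generation j0
  have hsplit : ∀ n, (ENNReal.ofReal (δ n) * ENNReal.ofReal ((((2 : ℝ) ^ υ n)⁻¹) ^ σ) * (dyadicCube d (υ n) (m n)).indicator (fun _ => 1) x) =
      (if υ n < j0 then ENNReal.ofReal (δ n) * ENNReal.ofReal ((((2 : ℝ) ^ υ n)⁻¹) ^ σ) * (dyadicCube d (υ n) (m n)).indicator (fun _ => 1) x else 0) +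
      (if υ n < j0 then 0 else ENNReal.ofReal (δ n) * ENNReal.ofReal ((((2 : ℝ) ^ υ n)⁻¹) ^ σ) * (dyadicCube d (υ n) (m n)).indicator (fun _ => 1) x) := by
    intro n; split <;> simp
  -- part 2 : large generations
  have hpart2 : (∑' n, (if υ n < j0 then 0 else ENNReal.ofReal (δ n) * ENNReal.ofReal ((((2 : ℝ) ^ υ n)⁻¹) ^ σ) * (dyadicCube d (υ n) (m n)).indicator (fun _ => 1) x)) ≤
      ENNReal.ofReal ((2:ℝ) ^ (-(j0:ℝ) * σ) * s) := by
    have hle : ∀ n, (if υ n < j0 then 0 else ENNReal.ofReal (δ n) * ENNReal.ofReal ((((2 : ℝ) ^ υ n)⁻¹) ^ σ) * (dyadicCube d (υ n) (m n)).indicator (fun _ => 1) x) ≤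
        ENNReal.ofReal ((2:ℝ) ^ (-(j0:ℝ) * σ)) *
          (ENNReal.ofReal (δ n) * (dyadicCube d (υ n) (m n)).indicator (fun _ => 1) x) := by
      intro n
      split
      · exact zero_le
      · rename_i hn
        have hun : (j0:ℝ) ≤ (υ n : ℝ) := by exact_mod_cast le_of_not_gt hn
        have hσ' : (((2:ℝ) ^ υ n)⁻¹) ^ σ ≤ (2:ℝ) ^ (-(j0:ℝ) * σ) := by
          rw [two_pow_inv_rpow]
          apply Real.rpow_le_rpow_of_exponent_le one_le_two
          nlinarith
        calc ENNReal.ofReal (δ n) * ENNReal.ofReal ((((2 : ℝ) ^ υ n)⁻¹) ^ σ) * (dyadicCube d (υ n) (m n)).indicator (fun _ => 1) x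
            = ENNReal.ofReal ((((2:ℝ) ^ υ n)⁻¹) ^ σ) *
              (ENNReal.ofReal (δ n) * (dyadicCube d (υ n) (m n)).indicator (fun _ => 1) x) := by
              ring
          _ ≤ ENNReal.ofReal ((2:ℝ) ^ (-(j0:ℝ) * σ)) *
              (ENNReal.ofReal (δ n) * (dyadicCube d (υ n) (m n)).indicator (fun _ => 1) x) :=
              mul_le_mul' (ENNReal.ofReal_le_ofReal hσ') le_rfl
    refine le_trans (ENNReal.tsum_le_tsum hle) ?_
    rw [ENNReal.tsum_mul_left, ← hSdef, hS_eq, ← ENNReal.ofReal_mul (by positivity)]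
  have hp2r : (2:ℝ) ^ (-(j0:ℝ) * σ) * s ≤ s ^ (w/u) := by
    have h1 : s ^ (w/(d:ℝ)) ≤ (2:ℝ) ^ (j0:ℝ) := by
      rw [← h2x0]; exact Real.rpow_le_rpow_of_exponent_le one_le_two hj0ge
    have h2 : (2:ℝ) ^ (-(j0:ℝ) * σ) ≤ (s ^ (w/(d:ℝ))) ^ (-σ) := by
      have heq : (2:ℝ) ^ (-(j0:ℝ) * σ) = ((2:ℝ) ^ (j0:ℝ)) ^ (-σ) := by
        rw [← Real.rpow_mul (by norm_num)]; ring_nf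
      rw [heq]
      exact Real.rpow_le_rpow_of_nonpos (by positivity) h1 (by linarith)
    have h3 : (s ^ (w/(d:ℝ))) ^ (-σ) * s = s ^ (w/u) := by
      rw [← Real.rpow_mul hs0.le]
      nth_rewrite 2 [← Real.rpow_one s]
      rw [← Real.rpow_add hs0]
      congr 1
      rw [hwu]; ring
    calc (2:ℝ) ^ (-(j0:ℝ) * σ) * s ≤ (s ^ (w/(d:ℝ))) ^ (-σ) * s :=
        mul_le_mul_of_nonneg_right h2 hs0.le
      _ = s ^ (w/u) := h3
  -- part 1 : small generations
  have hpart1 : (∑' n, (if υ n < j0 then ENNReal.ofReal (δ n) * ENNReal.ofReal ((((2 : ℝ) ^ υ n)⁻¹) ^ σ) * (dyadicCube d (υ n) (m n)).indicator (fun _ => 1) x else 0)) ≤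
      ∑' j : ℕ, (if j < j0 then ENNReal.ofReal ((2:ℝ) ^ ((j:ℝ) * c)) else 0) := by
    have hpt : ∀ n, (if υ n < j0 then ENNReal.ofReal (δ n) * ENNReal.ofReal ((((2 : ℝ) ^ υ n)⁻¹) ^ σ) * (dyadicCube d (υ n) (m n)).indicator (fun _ => 1) x else 0) ≤
        Set.indicator {n' | x ∈ dyadicCube d (υ n') (m n')}
          (fun n' => if υ n' < j0 then ENNReal.ofReal ((2:ℝ) ^ ((υ n' : ℝ) * c)) else 0) n := by
      intro n
      by_cases hxn : x ∈ dyadicCube d (υ n) (m n)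
      · rw [Set.indicator_of_mem (show n ∈ {n' | x ∈ dyadicCube d (υ n') (m n')} from hxn)]
        split
        · rename_i hn
          have ha_eq : (ENNReal.ofReal (δ n) * ENNReal.ofReal ((((2 : ℝ) ^ υ n)⁻¹) ^ σ) * (dyadicCube d (υ n) (m n)).indicator (fun _ => 1) x) =
              ENNReal.ofReal (δ n) * ENNReal.ofReal ((((2:ℝ) ^ υ n)⁻¹) ^ σ) := by
            rw [Set.indicator_of_mem hxn, mul_one]
          rw [ha_eq]
          calc ENNReal.ofReal (δ n) * ENNReal.ofReal ((((2:ℝ) ^ υ n)⁻¹) ^ σ)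
              ≤ ENNReal.ofReal ((2:ℝ) ^ ((υ n : ℝ) * ((d:ℝ)/w))) *
                ENNReal.ofReal ((2:ℝ) ^ (-(υ n : ℝ) * σ)) := by
                rw [two_pow_inv_rpow]; exact mul_le_mul' (hδ2 n) le_rfl
            _ = ENNReal.ofReal ((2:ℝ) ^ ((υ n : ℝ) * c)) := by
                rw [← ENNReal.ofReal_mul (by positivity), ← Real.rpow_add two_pos]
                congr 2
                rw [hcdef]; ring
        · exact zero_le
      · rw [Set.indicator_of_notMem (show n ∉ {n' | x ∈ dyadicCube d (υ n') (m n')} from hxn)]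
        have hz : (dyadicCube d (υ n) (m n)).indicator (fun _ => (1:ℝ≥0∞)) x = 0 :=
          Set.indicator_of_notMem hxn _
        split
        · rw [hz, mul_zero]
        · exact le_rfl
    refine le_trans (ENNReal.tsum_le_tsum hpt) ?_
    rw [← tsum_subtype {n' | x ∈ dyadicCube d (υ n') (m n')}
      (fun n' => if υ n' < j0 then ENNReal.ofReal ((2:ℝ) ^ ((υ n' : ℝ) * c)) else 0)]
    have hinj : Function.Injective
        (fun p : {n' | x ∈ dyadicCube d (υ n') (m n')} => υ p.1) := by
      rintro ⟨n, hn⟩ ⟨n', hn'⟩ hυ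
      simp only at hυ
      have hn2 : x ∈ dyadicCube d (υ n) (m n') := hυ ▸ hn'
      have hm : m n = m n' := dyadic_same_gen hn hn2
      exact Subtype.ext (hdist (by simp [Prod.ext_iff, hυ, hm]))
    exact ENNReal.tsum_comp_le_tsum_of_injective hinj
      (fun j => if j < j0 then ENNReal.ofReal ((2:ℝ) ^ ((j:ℝ) * c)) else 0)
  have hgeom : (∑' j : ℕ, (if j < j0 then ENNReal.ofReal ((2:ℝ) ^ ((j:ℝ) * c)) else 0))
      = ENNReal.ofReal (∑ j ∈ Finset.range j0, (2:ℝ) ^ ((j:ℝ) * c)) := by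
    rw [tsum_eq_sum (s := Finset.range j0) (fun j hj => if_neg (by simpa using hj)),
      ENNReal.ofReal_sum_of_nonneg (fun j _ => by positivity)]
    exact Finset.sum_congr rfl fun j hj => if_pos (Finset.mem_range.mp hj)
  have hgr : ∑ j ∈ Finset.range j0, (2:ℝ) ^ ((j:ℝ) * c) ≤
      s ^ (w/u) * (1 / (1 - (2:ℝ) ^ (σ - (d:ℝ)/w))) := by
    have h2c : (1:ℝ) < (2:ℝ) ^ c := by
      have h0 := Real.rpow_lt_rpow_of_exponent_lt one_lt_two hc
      simpa using h0
    have hsum_eq : ∑ j ∈ Finset.range j0, (2:ℝ) ^ ((j:ℝ) * c)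
        = ∑ j ∈ Finset.range j0, ((2:ℝ) ^ c) ^ j :=
      Finset.sum_congr rfl fun j _ => (two_rpow_nat j c).symm
    have hkey : ((2:ℝ) ^ c) ^ j0 ≤ (2:ℝ) ^ c * s ^ (w/u) := by
      rw [two_rpow_nat]
      calc (2:ℝ) ^ ((j0:ℝ) * c) ≤ (2:ℝ) ^ ((x0 + 1) * c) :=
            Real.rpow_le_rpow_of_exponent_le one_le_two (mul_le_mul_of_nonneg_right hj0lt.le hc.le)
        _ = (2:ℝ) ^ c * (2:ℝ) ^ (x0 * c) := by
            rw [← Real.rpow_add two_pos]; congr 1; ring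
        _ = (2:ℝ) ^ c * s ^ (w/u) := by
            rw [Real.rpow_mul (by norm_num : (0:ℝ) ≤ 2), h2x0, ← Real.rpow_mul hs0.le, hwdc]
    have h2cinv : (2:ℝ) ^ (σ - (d:ℝ)/w) = ((2:ℝ) ^ c)⁻¹ := by
      rw [hcdef, ← Real.rpow_neg (by norm_num)]; ring_nf
    have hden : (0:ℝ) < (2:ℝ) ^ c - 1 := by linarith
    have hP : (0:ℝ) ≤ s ^ (w/u) := Real.rpow_nonneg hs0.le _
    rw [hsum_eq, geom_sum_eq h2c.ne' j0, h2cinv, div_le_iff₀ hden]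
    have hfr : s ^ (w/u) * (1 / (1 - ((2:ℝ) ^ c)⁻¹)) * ((2:ℝ) ^ c - 1)
        = s ^ (w/u) * (2:ℝ) ^ c := by
      have h2c0 : ((2:ℝ) ^ c) ≠ 0 := by positivity
      have hti : 1 - ((2:ℝ) ^ c)⁻¹ ≠ 0 := by
        have : ((2:ℝ) ^ c)⁻¹ < 1 := by
          rw [inv_lt_one_iff₀]; right; exact h2c
        linarith
      field_simp
    rw [hfr]
    nlinarith [hkey]
  -- assemble
  calc (∑' n, ENNReal.ofReal (δ n) * ENNReal.ofReal ((((2 : ℝ) ^ υ n)⁻¹) ^ σ) * (dyadicCube d (υ n) (m n)).indicator (fun _ => 1) x)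
      = (∑' n, ((if υ n < j0 then ENNReal.ofReal (δ n) * ENNReal.ofReal ((((2 : ℝ) ^ υ n)⁻¹) ^ σ) * (dyadicCube d (υ n) (m n)).indicator (fun _ => 1) x else 0) +
          (if υ n < j0 then 0 else ENNReal.ofReal (δ n) * ENNReal.ofReal ((((2 : ℝ) ^ υ n)⁻¹) ^ σ) * (dyadicCube d (υ n) (m n)).indicator (fun _ => 1) x))) := tsum_congr hsplit
    _ = (∑' n, (if υ n < j0 then ENNReal.ofReal (δ n) * ENNReal.ofReal ((((2 : ℝ) ^ υ n)⁻¹) ^ σ) * (dyadicCube d (υ n) (m n)).indicator (fun _ => 1) x else 0)) +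
        (∑' n, (if υ n < j0 then 0 else ENNReal.ofReal (δ n) * ENNReal.ofReal ((((2 : ℝ) ^ υ n)⁻¹) ^ σ) * (dyadicCube d (υ n) (m n)).indicator (fun _ => 1) x)) := ENNReal.tsum_add
    _ ≤ ENNReal.ofReal (∑ j ∈ Finset.range j0, (2:ℝ) ^ ((j:ℝ) * c)) +
        ENNReal.ofReal ((2:ℝ) ^ (-(j0:ℝ) * σ) * s) :=
        add_le_add (hgeom ▸ hpart1) hpart2
    _ ≤ ENNReal.ofReal (s ^ (w/u) * (1 / (1 - (2:ℝ) ^ (σ - (d:ℝ)/w)))) +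
        ENNReal.ofReal (s ^ (w/u)) :=
        add_le_add (ENNReal.ofReal_le_ofReal hgr) (ENNReal.ofReal_le_ofReal hp2r)
    _ = ENNReal.ofReal (s ^ (w/u) * (1 / (1 - (2:ℝ) ^ (σ - (d:ℝ)/w))) + s ^ (w/u)) := by
        rw [← ENNReal.ofReal_add (mul_nonneg (Real.rpow_nonneg hs0.le _)
          (le_trans zero_le_one hC1)) (Real.rpow_nonneg hs0.le _)]
    _ ≤ ENNReal.ofReal (C * s ^ (w/u)) := by
        apply ENNReal.ofReal_le_ofReal
        rw [hCdef]
        nlinarith [Real.rpow_nonneg hs0.le (w/u), hC2]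
    _ = ENNReal.ofReal C * ENNReal.ofReal (s ^ (w/u)) := ENNReal.ofReal_mul hC0.le
    _ = ENNReal.ofReal C * S ^ (w/u) := by rw [hS_eq, ENNReal.ofReal_rpow_of_pos hs0]
end
end
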